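/- arXiv:1602.04689 — 3 statements merged into one kernel-verified Lean document; each statement's English description precedes it below -/
import Mathlib

section
/- Let G be a finite p-group of order at least p^5 with |G : G'| ≤ p^3. Suppose H is a maximal subgroup of G all of whose irreducible complex characters have degree 1 or are absent of degree p (i.e. H has no irreducible character of degree p). Then every other maximal subgroup M of G satisfies |M : M'| ≤ |G : G'|. -/
section Helpers
open Subgroup CategoryTheory
open scoped commutatorElement
set_option linter.unusedSectionVars false


section Basics
variable {G : Type*} [Group G] [Finite G]

lemma eq_of_le_of_index_eq' {K L : Subgroup G} (h : K ≤ L) (hi : K.index = L.index) : K = L := by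
  have h1 := Subgroup.card_mul_index K
  have h2 := Subgroup.card_mul_index L
  refine Subgroup.eq_of_le_of_card_ge h ?_
  have : Nat.card K * K.index = Nat.card L * L.index := by rw [h1, h2]
  rw [hi] at this
  have hL : L.index ≠ 0 := Subgroup.index_ne_zero_of_finite
  exact le_of_eq (Nat.eq_of_mul_eq_mul_right (Nat.pos_of_ne_zero hL) this).symm

lemma commutator_le_of_index_prime {p : ℕ} [Fact p.Prime] (K : Subgroup G) [K.Normal]
    (hK : K.index = p) : commutator G ≤ K := by
  have hcard : Nat.card (G ⧸ K) = p := hK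
  have hcyc : IsCyclic (G ⧸ K) := isCyclic_of_prime_card hcard
  rw [_root_.commutator_def, Subgroup.commutator_le]
  intro g1 _ g2 _
  have : ((⁅g1, g2⁆ : G) : G ⧸ K) = 1 := by
    obtain ⟨g, hg⟩ := hcyc.exists_generator
    obtain ⟨m, hm⟩ := hg ((g1 : G) : G ⧸ K)
    obtain ⟨n, hn⟩ := hg ((g2 : G) : G ⧸ K)
    have : ((⁅g1, g2⁆ : G) : G ⧸ K) = ⁅((g1 : G) : G ⧸ K), ((g2:G) : G ⧸ K)⁆ := rfl
    rw [this, ← hm, ← hn, commutatorElement_def]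
    group
  exact (QuotientGroup.eq_one_iff _).mp this

lemma normal_of_index_prime {p : ℕ} [Fact p.Prime] (hG : IsPGroup p G) (K : Subgroup G)
    (hK : K.index = p) : K.Normal := by
  have hp := (Fact.out : p.Prime)
  have hnc : NormalizerCondition G := by
    have := hG.isNilpotent
    exact normalizerCondition_of_isNilpotent
  have hKtop : K < ⊤ := by
    rcases lt_or_eq_of_le (le_top : K ≤ ⊤) with h | h
    · exact h
    · exfalso; rw [h] at hK; rw [Subgroup.index_top] at hK; exact hp.one_lt.ne' hK.symm
  have hlt := hnc K hKtop
  have hdvd : (Subgroup.normalizer (K : Set G)).index ∣ K.index := Subgroup.index_dvd_of_le le_normalizer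
  rw [hK] at hdvd
  rcases hp.eq_one_or_self_of_dvd _ hdvd with h1 | h1
  · exact Subgroup.normalizer_eq_top_iff.mp (Subgroup.index_eq_one.mp h1)
  · exfalso
    have : K = Subgroup.normalizer (K : Set G) := eq_of_le_of_index_eq' le_normalizer (by rw [hK, h1])
    exact hlt.ne this

end Basics

section CommIdent
variable {G : Type*} [Group G]

lemma comm_mul_left' (hc : ∀ g h z : G, Commute ⁅g, h⁆ z) (g₁ g₂ h : G) :
    ⁅g₁ * g₂, h⁆ = ⁅g₁, h⁆ * ⁅g₂, h⁆ := by
  have h1 : ⁅g₁ * g₂, h⁆ = g₁ * ⁅g₂, h⁆ * g₁⁻¹ * ⁅g₁, h⁆ := by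
    simp only [commutatorElement_def]; group
  have h2 : g₁ * ⁅g₂, h⁆ * g₁⁻¹ = ⁅g₂, h⁆ := by
    have h3 := (hc g₂ h g₁⁻¹).symm.eq
    rw [mul_assoc, ← h3]; group
  rw [h1, h2, (hc g₂ h ⁅g₁, h⁆).eq]

lemma comm_mul_right' (hc : ∀ g h z : G, Commute ⁅g, h⁆ z) (g h₁ h₂ : G) :
    ⁅g, h₁ * h₂⁆ = ⁅g, h₁⁆ * ⁅g, h₂⁆ := by
  have h1 : ⁅g, h₁ * h₂⁆ = ⁅g, h₁⁆ * (h₁ * ⁅g, h₂⁆ * h₁⁻¹) := by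
    simp only [commutatorElement_def]; group
  have h2 : h₁ * ⁅g, h₂⁆ * h₁⁻¹ = ⁅g, h₂⁆ := by
    have h3 := (hc g h₂ h₁⁻¹).symm.eq
    rw [mul_assoc, ← h3]; group
  rw [h1, h2]

lemma comm_pow_left' (hc : ∀ g h z : G, Commute ⁅g, h⁆ z) (g h : G) (n : ℕ) :
    ⁅g ^ n, h⁆ = ⁅g, h⁆ ^ n := by
  induction n with
  | zero => simp [commutatorElement_def]
  | succ n ih => rw [pow_succ, comm_mul_left' hc, ih, pow_succ]

lemma comm_pow_right' (hc : ∀ g h z : G, Commute ⁅g, h⁆ z) (g h : G) (n : ℕ) :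
    ⁅g, h ^ n⁆ = ⁅g, h⁆ ^ n := by
  induction n with
  | zero => simp [commutatorElement_def]
  | succ n ih => rw [pow_succ, comm_mul_right' hc, ih, pow_succ]

end CommIdent

section PartA
variable {p : ℕ} [Fact p.Prime] {G : Type*} [Group G] [Finite G]

lemma decomp_aux {A B : Subgroup G} [B.Normal] (hB : B.index = p) {a x : G} (ha : a ∈ A)
    (hx : x ∈ A) (haB : a ∉ B) : ∃ (n : ℕ) (d : G), d ∈ A ⊓ B ∧ x = a ^ n * d := by
  have hp := (Fact.out : p.Prime)
  have hcard : Nat.card (G ⧸ B) = p := hB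
  set abar : G ⧸ B := (a : G ⧸ B) with habar
  have h1 : abar ≠ 1 := by
    simpa [habar, QuotientGroup.eq_one_iff] using haB
  have hord : orderOf abar = p := by
    refine orderOf_eq_prime ?_ h1
    rw [← hcard]; exact pow_card_eq_one'
  have htop : Subgroup.zpowers abar = ⊤ := by
    apply Subgroup.eq_top_of_card_eq
    rw [Nat.card_zpowers, hord, hcard]
  have hmem : ((x : G ⧸ B)) ∈ Submonoid.powers abar := by
    rw [mem_powers_iff_mem_zpowers, htop]; trivial
  obtain ⟨n, hn⟩ := hmem
  have hdA : (a ^ n)⁻¹ * x ∈ A := mul_mem (inv_mem (pow_mem ha n)) hx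
  have hdB : (a ^ n)⁻¹ * x ∈ B := by
    rw [← QuotientGroup.eq_one_iff]
    have h2 : ((((a ^ n)⁻¹ * x : G)) : G ⧸ B) = (abar ^ n)⁻¹ * (x : G ⧸ B) := by
      push_cast [habar]; rfl
    rw [h2, ← hn]; group
  exact ⟨n, (a ^ n)⁻¹ * x, Subgroup.mem_inf.mpr ⟨hdA, hdB⟩, by group⟩

lemma two_abelian_maximals {A B : Subgroup G} (hAn : A.Normal) (hBn : B.Normal)
    (hA : A.index = p) (hB : B.index = p) (hAB : A ≠ B)
    (hAc : ∀ x ∈ A, ∀ y ∈ A, x * y = y * x) (hBc : ∀ x ∈ B, ∀ y ∈ B, x * y = y * x) :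
    Nat.card (commutator G) ≤ p := by
  have hp := (Fact.out : p.Prime)
  haveI := hAn; haveI := hBn
  have hsup : A ⊔ B = ⊤ := by
    by_contra hne
    have hdvd : (A ⊔ B).index ∣ p := hA ▸ Subgroup.index_dvd_of_le le_sup_left
    rcases hp.eq_one_or_self_of_dvd _ hdvd with h1 | h1
    · exact hne (Subgroup.index_eq_one.mp h1)
    · have h2 : A = A ⊔ B := eq_of_le_of_index_eq' le_sup_left (by rw [hA, h1])
      have hBA : B ≤ A := h2 ▸ le_sup_right
      exact hAB (eq_of_le_of_index_eq' hBA (by rw [hA, hB])).symm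
  have hGA : commutator G ≤ A := commutator_le_of_index_prime A hA
  have hGB : commutator G ≤ B := commutator_le_of_index_prime B hB
  have hdecompG : ∀ g : G, ∃ u v : G, u ∈ A ∧ v ∈ B ∧ g = u * v := by
    intro g
    have hg : g ∈ ((A ⊔ B : Subgroup G) : Set G) := by rw [hsup]; trivial
    rw [Subgroup.mul_normal A B] at hg
    obtain ⟨u, hu, v, hv, huv⟩ := hg
    exact ⟨u, v, hu, hv, huv.symm⟩
  have hcent : ∀ z ∈ A ⊓ B, ∀ g : G, Commute z g := by
    intro z hz g
    obtain ⟨u, v, hu, hv, rfl⟩ := hdecompG g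
    exact Commute.mul_right (hAc z hz.1 u hu) (hBc z hz.2 v hv)
  have hc : ∀ g h z : G, Commute ⁅g, h⁆ z := by
    intro g h z
    have hm : ⁅g, h⁆ ∈ commutator G := commutator_mem_commutator (mem_top g) (mem_top h)
    exact hcent _ ⟨hGA hm, hGB hm⟩ z
  have hct : ∀ d ∈ A ⊓ B, ∀ g : G, ⁅d, g⁆ = 1 := fun d hd g =>
    commutatorElement_eq_one_iff_commute.mpr (hcent d hd g)
  have hct' : ∀ g : G, ∀ d ∈ A ⊓ B, ⁅g, d⁆ = 1 := fun g d hd =>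
    commutatorElement_eq_one_iff_commute.mpr (hcent d hd g).symm
  have hAnB : ¬ A ≤ B := fun hle => hAB (eq_of_le_of_index_eq' hle (by rw [hA, hB]))
  have hBnA : ¬ B ≤ A := fun hle => hAB (eq_of_le_of_index_eq' hle (by rw [hA, hB])).symm
  obtain ⟨a, haA, haB⟩ := SetLike.not_le_iff_exists.mp hAnB
  obtain ⟨b, hbB, hbA⟩ := SetLike.not_le_iff_exists.mp hBnA
  set c := ⁅a, b⁆ with hc_def
  have hapB : a ^ p ∈ A ⊓ B := by
    have hb2 : a ^ p ∈ B := by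
      rw [← QuotientGroup.eq_one_iff]
      have h2 : (((a ^ p : G)) : G ⧸ B) = ((a : G ⧸ B)) ^ p := by push_cast; rfl
      rw [h2, ← (hB : Nat.card (G ⧸ B) = p)]
      exact pow_card_eq_one'
    exact Subgroup.mem_inf.mpr ⟨pow_mem haA p, hb2⟩
  have hcp : c ^ p = 1 := by
    rw [hc_def, ← comm_pow_left' hc]
    exact hct _ hapB b
  -- commutator of A-element with B-element
  have hstep : ∀ x ∈ A, ∀ y ∈ B, ⁅x, y⁆ ∈ Subgroup.zpowers c := by
    intro x hx y hy
    obtain ⟨m, d, hd, rfl⟩ := decomp_aux hB haA hx haB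
    obtain ⟨n, e, he, rfl⟩ := decomp_aux (A := B) (B := A) hA hbB hy hbA
    have he' : e ∈ A ⊓ B := by rwa [inf_comm] at he
    rw [comm_mul_left' hc, hct d hd, mul_one, comm_pow_left' hc,
      comm_mul_right' hc, hct' _ e he', mul_one, comm_pow_right' hc]
    exact pow_mem (pow_mem (Subgroup.mem_zpowers c) n) m
  have hstepA : ∀ x ∈ A, ∀ y ∈ A, ⁅x, y⁆ = 1 := fun x hx y hy =>
    commutatorElement_eq_one_iff_mul_comm.mpr (hAc x hx y hy)
  have hstepB : ∀ x ∈ B, ∀ y ∈ B, ⁅x, y⁆ = 1 := fun x hx y hy =>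
    commutatorElement_eq_one_iff_mul_comm.mpr (hBc x hx y hy)
  have hle : commutator G ≤ Subgroup.zpowers c := by
    rw [_root_.commutator_def, Subgroup.commutator_le]
    intro g _ h _
    obtain ⟨u, v, hu, hv, rfl⟩ := hdecompG g
    obtain ⟨u', v', hu', hv', rfl⟩ := hdecompG h
    rw [comm_mul_left' hc, comm_mul_right' hc, comm_mul_right' hc]
    refine mul_mem (mul_mem ?_ ?_) (mul_mem ?_ ?_)
    · rw [hstepA u hu u' hu']; exact one_mem _
    · exact hstep u hu v' hv'
    · rw [← commutatorElement_inv]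
      exact inv_mem (hstep u' hu' v hv)
    · rw [hstepB v hv v' hv']; exact one_mem _
  calc Nat.card (commutator G) ≤ Nat.card (Subgroup.zpowers c) := Subgroup.card_le_of_le hle
    _ = orderOf c := Nat.card_zpowers c
    _ ≤ p := Nat.le_of_dvd hp.pos (orderOf_dvd_of_pow_eq_one hcp)

end PartA

section Core
variable {p : ℕ} [Fact p.Prime]

lemma rep_core (Q : Type) [Group Q] [Finite Q] (A : Subgroup Q) [hN : A.Normal]
    (hA : A.index = p) (hab : ∀ x ∈ A, ∀ y ∈ A, x * y = y * x)
    (hnonab : ∃ u v : Q, ⁅u, v⁆ ≠ 1) :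
    ∃ ρ : Representation ℂ Q ((Q ⧸ A) → ℂ),
      ∀ U : Submodule ℂ ((Q ⧸ A) → ℂ), (∀ (q : Q) (f : (Q ⧸ A) → ℂ), f ∈ U → ρ q f ∈ U) →
        U = ⊥ ∨ U = ⊤ := by
  classical
  haveI : Fintype (Q ⧸ A) := Fintype.ofFinite _
  have hp := (Fact.out : p.Prime)
  -- A is commutative
  letI : CommGroup ↥A := { (inferInstance : Group ↥A) with
    mul_comm := fun x y => Subtype.ext (hab _ x.2 _ y.2) }
  -- characters separate points
  have hsep : ∀ r : ↥A, r ≠ 1 → ∃ φ : ↥A →* ℂˣ, φ r ≠ 1 := fun r hr =>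
    CommGroup.exists_apply_ne_one_of_hasEnoughRootsOfUnity ↥A ℂ hr
  -- choose a character moved by conjugation
  have hlam : ∃ (l : ↥A →* ℂˣ) (q₀ : Q) (a₀ : ↥A),
      l ⟨q₀ * a₀ * q₀⁻¹, hN.conj_mem _ a₀.2 q₀⟩ ≠ l a₀ := by
    by_contra hall
    push_neg at hall
    have hconj : ∀ (q : Q) (a : ↥A), q * (a : Q) * q⁻¹ = a := by
      intro q a
      set r : ↥A := ⟨q * a * q⁻¹, hN.conj_mem _ a.2 q⟩ * a⁻¹ with hr
      by_cases h1 : r = 1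
      · have h2 := congrArg Subtype.val h1
        have h3 : (q * (a:Q) * q⁻¹) * (a:Q)⁻¹ = 1 := h2
        exact mul_inv_eq_one.mp h3
      · obtain ⟨φ, hφ⟩ := hsep r h1
        exfalso
        apply hφ
        rw [hr, map_mul, map_inv, hall]
        group
    -- A is central
    have hcent : A ≤ Subgroup.center Q := by
      intro a ha
      rw [Subgroup.mem_center_iff]
      intro g
      have := hconj g ⟨a, ha⟩
      calc g * a = (g * a * g⁻¹) * g := by group
        _ = a * g := by rw [this]
    -- Q is commutative, contradiction
    obtain ⟨u, v, huv⟩ := hnonab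
    apply huv
    rw [commutatorElement_eq_one_iff_mul_comm]
    have hcyc : IsCyclic (Q ⧸ A) := isCyclic_of_prime_card (hA : Nat.card (Q ⧸ A) = p)
    have hker : (QuotientGroup.mk' A).ker ≤ Subgroup.center Q := by
      rw [QuotientGroup.ker_mk']; exact hcent
    exact commutative_of_cyclic_center_quotient (QuotientGroup.mk' A) hker u v
  obtain ⟨l, q₀, a₀, hq₀⟩ := hlam
  -- the stabilizer of l under conjugation
  set S : Subgroup Q := {
    carrier := {q : Q | ∀ a : ↥A, l ⟨q * a * q⁻¹, hN.conj_mem _ a.2 q⟩ = l a}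
    one_mem' := by
      intro a
      have : (⟨1 * (a:Q) * 1⁻¹, hN.conj_mem _ a.2 1⟩ : ↥A) = a := Subtype.ext (by group)
      rw [this]
    mul_mem' := by
      intro x y hx hy a
      set b : ↥A := ⟨y * a * y⁻¹, hN.conj_mem _ a.2 y⟩ with hb
      have h1 : (⟨x * y * (a:Q) * (x * y)⁻¹, hN.conj_mem _ a.2 (x*y)⟩ : ↥A)
          = ⟨x * (b:Q) * x⁻¹, hN.conj_mem _ b.2 x⟩ := Subtype.ext (by simp only [hb]; group)
      rw [h1, hx b, hy a]
    inv_mem' := by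
      intro x hx a
      set b : ↥A := ⟨x⁻¹ * a * (x⁻¹)⁻¹, hN.conj_mem _ a.2 x⁻¹⟩ with hb
      have h1 := hx b
      have h2 : (⟨x * (b:Q) * x⁻¹, hN.conj_mem _ b.2 x⟩ : ↥A) = a := Subtype.ext (by simp only [hb]; group)
      rw [h2] at h1
      exact h1.symm } with hSdef
  have hmemS : ∀ q : Q, q ∈ S ↔ ∀ a : ↥A, l ⟨q * a * q⁻¹, hN.conj_mem _ a.2 q⟩ = l a :=
    fun q => Iff.rfl
  have hAS : A ≤ S := by
    intro a' ha'
    rw [hmemS]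
    intro a
    have : (⟨a' * (a:Q) * a'⁻¹, hN.conj_mem _ a.2 a'⟩ : ↥A) = a := by
      apply Subtype.ext
      have := hab a' ha' a a.2
      show a' * (a:Q) * a'⁻¹ = a
      rw [this]; group
    rw [this]
  have hSA : S = A := by
    have hq₀S : q₀ ∉ S := by
      rw [hmemS]; push_neg; exact ⟨a₀, hq₀⟩
    have hne : S ≠ ⊤ := fun h => hq₀S (h ▸ Subgroup.mem_top q₀)
    have hdvd : S.index ∣ p := hA ▸ Subgroup.index_dvd_of_le hAS
    rcases hp.eq_one_or_self_of_dvd _ hdvd with h1 | h1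
    · exact absurd (Subgroup.index_eq_one.mp h1) hne
    · exact (eq_of_le_of_index_eq' hAS (by rw [hA, h1])).symm
  have lcongr : ∀ {g g' : Q} (hg : g ∈ A) (hg' : g' ∈ A), g = g' →
      l ⟨g, hg⟩ = l ⟨g', hg'⟩ := by rintro g g' hg hg' rfl; rfl
  -- the transversal
  set out : Q ⧸ A → Q := Quotient.out with hout_def
  have hout : ∀ x : Q ⧸ A, ((out x : Q) : Q ⧸ A) = x := fun x => Quotient.out_eq' x
  have htA : ∀ (q : Q) (x : Q ⧸ A), (out ((q : Q ⧸ A) * x))⁻¹ * q * out x ∈ A := by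
    intro q x
    have h1 : (((out ((q : Q ⧸ A) * x))⁻¹ * q * out x : Q) : Q ⧸ A)
        = ((out ((q : Q ⧸ A) * x) : Q) : Q ⧸ A)⁻¹ * (q : Q ⧸ A) * ((out x : Q) : Q ⧸ A) := by
      push_cast; rfl
    rw [← QuotientGroup.eq_one_iff, h1, hout, hout]
    group
  set lt : Q → Q ⧸ A → ℂˣ := fun q x => l ⟨(out ((q : Q ⧸ A) * x))⁻¹ * q * out x, htA q x⟩
    with hlt_def
  have hco : ∀ (q₁ q₂ : Q) (x : Q ⧸ A), lt (q₁ * q₂) x = lt q₁ ((q₂ : Q ⧸ A) * x) * lt q₂ x := by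
    intro q₁ q₂ x
    simp only [hlt_def]
    rw [← map_mul]
    apply lcongr
    have h1 : ((q₁ * q₂ : Q) : Q ⧸ A) * x = (q₁ : Q ⧸ A) * ((q₂ : Q ⧸ A) * x) := by
      rw [← mul_assoc]; rfl
    rw [h1]; group
  set act : Q → ((Q ⧸ A) → ℂ) →ₗ[ℂ] ((Q ⧸ A) → ℂ) := fun q =>
    { toFun := fun f x => (lt q ((q : Q ⧸ A)⁻¹ * x) : ℂ) * f ((q : Q ⧸ A)⁻¹ * x)
      map_add' := fun f g => by funext x; simp [mul_add]
      map_smul' := fun c f => by funext x; simp; ring } with hact_def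
  have hact_apply : ∀ (q : Q) (f : (Q ⧸ A) → ℂ) (x : Q ⧸ A),
      act q f x = (lt q ((q : Q ⧸ A)⁻¹ * x) : ℂ) * f ((q : Q ⧸ A)⁻¹ * x) := fun q f x => rfl
  have hmul : ∀ q₁ q₂ : Q, act (q₁ * q₂) = (act q₁) ∘ₗ (act q₂) := by
    intro q₁ q₂
    apply LinearMap.ext; intro f
    funext x
    rw [LinearMap.comp_apply, hact_apply, hact_apply, hact_apply]
    have h2 : ((q₁ * q₂ : Q) : Q ⧸ A)⁻¹ * x = (q₂ : Q ⧸ A)⁻¹ * ((q₁ : Q ⧸ A)⁻¹ * x) := by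
      have h1 : ((q₁ * q₂ : Q) : Q ⧸ A) = (q₁ : Q ⧸ A) * (q₂ : Q ⧸ A) := rfl
      rw [h1, mul_inv_rev, mul_assoc]
    rw [h2, hco q₁ q₂ ((q₂ : Q ⧸ A)⁻¹ * ((q₁ : Q ⧸ A)⁻¹ * x))]
    have h3 : (q₂ : Q ⧸ A) * ((q₂ : Q ⧸ A)⁻¹ * ((q₁ : Q ⧸ A)⁻¹ * x)) = (q₁ : Q ⧸ A)⁻¹ * x := by
      group
    rw [h3]
    push_cast
    ring
  have hone : act 1 = LinearMap.id := by
    apply LinearMap.ext; intro f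
    funext x
    rw [hact_apply]
    have h1 : ((1 : Q) : Q ⧸ A) = 1 := rfl
    have h2 : ((1 : Q) : Q ⧸ A)⁻¹ * x = x := by rw [h1]; group
    have h3 : lt 1 x = 1 := by
      simp only [hlt_def]
      have h4 : (⟨(out (((1:Q) : Q ⧸ A) * x))⁻¹ * 1 * out x, htA 1 x⟩ : ↥A) = 1 := by
        apply Subtype.ext
        show (out (((1:Q) : Q ⧸ A) * x))⁻¹ * 1 * out x = 1
        rw [h1, one_mul]
        group
      rw [h4, map_one]
    rw [h2, h3]
    simp
  refine ⟨{ toFun := act, map_one' := by show act 1 = 1; rw [hone]; rfl,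
            map_mul' := fun q₁ q₂ => by
              show act (q₁ * q₂) = act q₁ * act q₂
              rw [hmul]; rfl }, ?_⟩
  intro U hU
  by_cases hbot : U = ⊥
  · exact Or.inl hbot
  right
  replace hU : ∀ (q : Q) (f : (Q ⧸ A) → ℂ), f ∈ U → act q f ∈ U := hU
  have hconjmem : ∀ (x : Q ⧸ A) (a : ↥A), (out x)⁻¹ * a * out x ∈ A := by
    intro x a
    have h0 := hN.conj_mem _ a.2 (out x)⁻¹
    simpa using h0
  set mval : (Q ⧸ A) → ↥A → ℂˣ := fun x a => l ⟨(out x)⁻¹ * a * out x, hconjmem x a⟩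
    with hmval_def
  have hAact : ∀ (a : ↥A) (f : (Q ⧸ A) → ℂ) (x : Q ⧸ A),
      act (a : Q) f x = (mval x a : ℂ) * f x := by
    intro a f x
    have h1 : ((a : Q) : Q ⧸ A) = 1 := (QuotientGroup.eq_one_iff _).mpr a.2
    rw [hact_apply]
    have h2 : ((a : Q) : Q ⧸ A)⁻¹ * x = x := by rw [h1]; group
    rw [h2]
    congr 1
    simp only [hlt_def, hmval_def]
    refine congrArg Units.val (lcongr _ _ ?_)
    rw [h1, one_mul]
  have hdist : ∀ x y : Q ⧸ A, x ≠ y → ∃ a : ↥A, mval x a ≠ mval y a := by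
    intro x y hxy
    by_contra hcon
    push_neg at hcon
    simp only [hmval_def] at hcon
    have hwS : (out x)⁻¹ * out y ∈ S := by
      rw [hmemS]
      intro a₁
      set a : ↥A := ⟨out y * a₁ * (out y)⁻¹, hN.conj_mem _ a₁.2 (out y)⟩ with ha
      calc l ⟨(out x)⁻¹ * out y * a₁ * ((out x)⁻¹ * out y)⁻¹, _⟩
          = l ⟨(out x)⁻¹ * a * out x, hconjmem x a⟩ := lcongr _ _ (by simp only [ha]; group)
        _ = l ⟨(out y)⁻¹ * a * out y, hconjmem y a⟩ := hcon a
        _ = l ⟨(a₁ : Q), a₁.2⟩ := lcongr _ _ (by simp only [ha]; group)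
        _ = l a₁ := by rw [Subtype.coe_eta]
    rw [hSA] at hwS
    apply hxy
    have h4 : ((out x : Q) : Q ⧸ A) = ((out y : Q) : Q ⧸ A) := QuotientGroup.eq.mpr hwS
    rwa [hout, hout] at h4
  set e : (Q ⧸ A) → (Q ⧸ A) → ℂ := fun x y => if y = x then 1 else 0 with he_def
  have hq_e : ∀ (q : Q) (x : Q ⧸ A), act q (e x) = (lt q x : ℂ) • e ((q : Q ⧸ A) * x) := by
    intro q x
    funext y
    rw [hact_apply]
    by_cases hy : y = (q : Q ⧸ A) * x
    · have h1 : (q : Q ⧸ A)⁻¹ * y = x := by rw [hy]; group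
      simp [he_def, h1, hy]
    · have h1 : (q : Q ⧸ A)⁻¹ * y ≠ x := by
        intro h; apply hy; rw [← h]; group
      simp [he_def, h1, hy]
  have hind : ∀ (n : ℕ) (f : (Q ⧸ A) → ℂ), f ∈ U →
      (Finset.univ.filter (fun z => f z ≠ 0)).card ≤ n → ∀ x, f x ≠ 0 → e x ∈ U := by
    intro n
    induction n with
    | zero =>
      intro f hf hcard x hx
      exfalso
      have h1 : x ∈ Finset.univ.filter (fun z => f z ≠ 0) := by simp [hx]
      have h2 := Finset.card_pos.mpr ⟨x, h1⟩
      omega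
    | succ n ih =>
      intro f hf hcard x hx
      by_cases hsing : ∀ y, f y ≠ 0 → y = x
      · have hfx : f = f x • e x := by
          funext y
          by_cases hy : y = x
          · subst hy; simp [he_def]
          · have h0 : f y = 0 := by
              by_contra h
              exact hy (hsing y h)
            simp [he_def, hy, h0]
        have h5 : e x = (f x)⁻¹ • f := by
          funext y
          by_cases hy : y = x
          · subst hy
            simp [he_def, inv_mul_cancel₀ hx]
          · have h0 : f y = 0 := by
              by_contra h
              exact hy (hsing y h)
            simp [he_def, hy, h0]
        rw [h5]
        exact Submodule.smul_mem U _ hf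
      · push_neg at hsing
        obtain ⟨y, hy0, hyx⟩ := hsing
        obtain ⟨a, hay⟩ := hdist x y (fun h => hyx (h.symm))
        set g : (Q ⧸ A) → ℂ := fun z => act (a : Q) f z - (mval y a : ℂ) * f z with hg_def
        have hgU : g ∈ U := by
          have h1 := hU (a : Q) f hf
          have h2 : g = act (a : Q) f - (mval y a : ℂ) • f := by
            funext z; simp [hg_def]
          rw [h2]
          exact Submodule.sub_mem U h1 (Submodule.smul_mem U _ hf)
        have hgz : ∀ z, g z = ((mval z a : ℂ) - (mval y a : ℂ)) * f z := by
          intro z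
          simp only [hg_def, hAact a f z]
          ring
        have hgx : g x ≠ 0 := by
          rw [hgz]
          apply mul_ne_zero _ hx
          intro h
          apply hay
          exact Units.ext (by linear_combination h)
        have hgy : g y = 0 := by rw [hgz]; ring
        have hsub : Finset.univ.filter (fun z => g z ≠ 0)
            ⊆ (Finset.univ.filter (fun z => f z ≠ 0)).erase y := by
          intro z hz
          simp only [Finset.mem_filter, Finset.mem_erase, Finset.mem_univ, true_and] at hz ⊢
          constructor
          · intro h; subst h; exact hz hgy
          · intro h; apply hz; rw [hgz, h]; ring
        have hcard2 : (Finset.univ.filter (fun z => g z ≠ 0)).card ≤ n := by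
          have h1 := Finset.card_le_card hsub
          have h2 : y ∈ Finset.univ.filter (fun z => f z ≠ 0) := by simp [hy0]
          have h3 := Finset.card_erase_of_mem h2
          omega
        exact ih g hgU hcard2 x hgx
  have hex : ∃ x, e x ∈ U := by
    obtain ⟨f, hfU, hf0⟩ := Submodule.exists_mem_ne_zero_of_ne_bot hbot
    have hx : ∃ x, f x ≠ 0 := by
      by_contra h
      push_neg at h
      exact hf0 (funext h)
    obtain ⟨x, hx⟩ := hx
    exact ⟨x, hind _ f hfU le_rfl x hx⟩
  have hall : ∀ y, e y ∈ U := by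
    obtain ⟨x, hx⟩ := hex
    intro y
    set q : Q := out y * (out x)⁻¹ with hq_def
    have h1 : (q : Q ⧸ A) * x = y := by
      conv_lhs => rw [← hout x]
      have h2 : (q : Q ⧸ A) * ((out x : Q) : Q ⧸ A) = ((q * out x : Q) : Q ⧸ A) := rfl
      rw [h2]
      have h3 : q * out x = out y := by rw [hq_def]; group
      rw [h3, hout]
    have h4 := hU q (e x) hx
    rw [hq_e q x, h1] at h4
    have h5 : e y = ((lt q x : ℂ))⁻¹ • ((lt q x : ℂ) • e y) := by
      rw [smul_smul, inv_mul_cancel₀ (Units.ne_zero (lt q x)), one_smul]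
    rw [h5]
    exact Submodule.smul_mem U _ h4
  apply eq_top_iff.mpr
  intro f _
  have hsum : f = ∑ y ∈ Finset.univ, f y • e y := by
    funext z
    rw [Finset.sum_apply]
    simp only [Pi.smul_apply, he_def, smul_eq_mul, mul_ite, mul_one, mul_zero]
    rw [Finset.sum_ite_eq]
    simp
  rw [hsum]
  exact Submodule.sum_mem U (fun y _ => Submodule.smul_mem U _ (hall y))

end Core


lemma simple_of_irreducible {Γ : Type} [Group Γ] {V : Type} [AddCommGroup V] [Module ℂ V]
    [FiniteDimensional ℂ V] (ρ : Representation ℂ Γ V) (hnz : ∃ v : V, v ≠ 0)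
    (hirr : ∀ U : Submodule ℂ V, (∀ (g : Γ) (v : V), v ∈ U → ρ g v ∈ U) → U = ⊥ ∨ U = ⊤) :
    CategoryTheory.Simple (FDRep.of ρ) := by
  constructor
  intro Y f hmono
  constructor
  · intro hiso h0
    obtain ⟨v, hv⟩ := hnz
    have h1 : CategoryTheory.inv f ≫ f = 𝟙 (FDRep.of ρ) := IsIso.inv_hom_id f
    have h2 := congrArg Action.Hom.hom h1
    rw [Action.comp_hom, Action.id_hom] at h2
    have h4 : f.hom ((CategoryTheory.inv f).hom v) = v := congrArg (fun φ => φ.hom.hom v) h2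
    have h5 : f.hom = 0 := by rw [h0]; rfl
    rw [h5] at h4
    exact hv (h4.symm.trans rfl)
  · intro hf0
    -- f.hom is injective
    have hker : ∀ w : Y, f.hom w = 0 → w = 0 := by
      have hmaps : ∀ (g : Γ), ∀ w ∈ LinearMap.ker f.hom.hom.hom, (Y.ρ g) w ∈ LinearMap.ker f.hom.hom.hom := by
        intro g w hw
        rw [LinearMap.mem_ker] at hw ⊢
        have h1 := congrArg (fun φ => φ.hom.hom w) (f.comm g)
        have h2 : f.hom ((Y.ρ g) w) = ρ g (f.hom w) := h1
        have h3 : (ρ g) (f.hom w) = 0 := by rw [show f.hom w = 0 from hw, map_zero]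
        exact h2.trans h3
      set ρK : Representation ℂ Γ ↥(LinearMap.ker f.hom.hom.hom) :=
        { toFun := fun g => (Y.ρ g).restrict (hmaps g)
          map_one' := by
            apply LinearMap.ext
            rintro ⟨w, hw⟩
            apply Subtype.ext
            show (Y.ρ 1) w = w
            rw [map_one]
            rfl
          map_mul' := by
            intro g₁ g₂
            apply LinearMap.ext
            rintro ⟨w, hw⟩
            apply Subtype.ext
            show (Y.ρ (g₁ * g₂)) w = (Y.ρ g₁) ((Y.ρ g₂) w)
            rw [map_mul]
            rfl } with hρK
      set ι : FDRep.of ρK ⟶ Y :=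
        { hom := ConcreteCategory.ofHom (LinearMap.ker f.hom.hom.hom).subtype
          comm := fun g => by
            apply FGModuleCat.hom_ext
            apply LinearMap.ext
            rintro ⟨w, hw⟩
            rfl } with hι
      have hcomp : ι ≫ f = (0 : FDRep.of ρK ⟶ FDRep.of ρ) := by
        apply Action.hom_ext
        apply FGModuleCat.hom_ext
        apply LinearMap.ext
        rintro ⟨w, hw⟩
        have : f.hom w = 0 := hw
        exact this
      have hι0 : ι = 0 := by
        apply hmono.right_cancellation
        rw [hcomp, Limits.zero_comp]
      intro w hw
      have h4 := congrArg Action.Hom.hom hι0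
      have h5 : ι.hom.hom.hom ⟨w, hw⟩ = (0 : FDRep.of ρK ⟶ Y).hom.hom.hom ⟨w, hw⟩ := by rw [h4]
      exact h5
    have hinj : Function.Injective f.hom := by
      intro a b hab
      have : f.hom (a - b) = 0 := by rw [map_sub, hab, sub_self]
      have := hker _ this
      rwa [sub_eq_zero] at this
    -- f.hom is surjective
    have hfhom : (f.hom.hom.hom : Y →ₗ[ℂ] V) ≠ 0 := by
      intro h
      apply hf0
      apply Action.hom_ext
      apply FGModuleCat.hom_ext
      exact h
    have hinvr : ∀ (g : Γ), ∀ v ∈ LinearMap.range f.hom.hom.hom, ρ g v ∈ LinearMap.range f.hom.hom.hom := by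
      rintro g v ⟨w, rfl⟩
      exact ⟨Y.ρ g w, congrArg (fun φ => φ.hom.hom w) (f.comm g)⟩
    have hrange : LinearMap.range f.hom.hom.hom = ⊤ := by
      rcases hirr (LinearMap.range f.hom.hom.hom) hinvr with h | h
      · exfalso
        apply hfhom
        apply LinearMap.ext
        intro w
        have : f.hom.hom.hom w ∈ LinearMap.range f.hom.hom.hom := LinearMap.mem_range_self _ w
        rw [h] at this
        simpa using this
      · exact h
    have hsurj : Function.Surjective f.hom := LinearMap.range_eq_top.mp hrange
    set e : Y ≃ₗ[ℂ] V := LinearEquiv.ofBijective (f.hom.hom.hom : Y →ₗ[ℂ] V) ⟨hinj, hsurj⟩ with he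
    have hee : ∀ w : Y, e w = f.hom w := fun _ => rfl
    set ginv : FDRep.of ρ ⟶ Y :=
      { hom := ConcreteCategory.ofHom (e.symm : V →ₗ[ℂ] Y)
        comm := fun g => by
          apply FGModuleCat.hom_ext
          apply LinearMap.ext
          intro w
          apply hinj
          show f.hom (e.symm ((ρ g) w)) = f.hom ((Y.ρ g) (e.symm w))
          have h6 : f.hom ((Y.ρ g) (e.symm w)) = ρ g (f.hom (e.symm w)) :=
            congrArg (fun φ => φ.hom.hom (e.symm w)) (f.comm g)
          rw [h6]
          have h7 : ∀ u : V, f.hom (e.symm u) = u := fun u => e.apply_symm_apply u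
          rw [h7, h7] } with hg
    refine ⟨⟨ginv, ?_, ?_⟩⟩
    · apply Action.hom_ext
      apply FGModuleCat.hom_ext
      apply LinearMap.ext
      intro w
      show e.symm (f.hom w) = w
      exact e.symm_apply_apply w
    · apply Action.hom_ext
      apply FGModuleCat.hom_ext
      apply LinearMap.ext
      intro w
      show f.hom (e.symm w) = w
      exact e.apply_symm_apply w


section Rest
variable {p : ℕ} [Fact p.Prime]

lemma exists_simple_of_comm_not_le (Γ : Type) [Group Γ] [Finite Γ]
    (hΓ : IsPGroup p Γ) (K : Subgroup Γ) [hKn : K.Normal] (hK : K.index = p)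
    (hne : ¬ _root_.commutator Γ ≤ ⁅K, K⁆) :
    ∃ V : FDRep ℂ Γ, CategoryTheory.Simple V ∧ Module.finrank ℂ V = p := by
  set N : Subgroup Γ := ⁅K, K⁆ with hN
  haveI : N.Normal := Subgroup.commutator_normal K K
  set π : Γ →* Γ ⧸ N := QuotientGroup.mk' N with hπ
  have hπs : Function.Surjective π := QuotientGroup.mk'_surjective N
  set A : Subgroup (Γ ⧸ N) := Subgroup.map π K with hA
  haveI : A.Normal := Subgroup.Normal.map hKn π hπs
  have hNK : N ≤ K := Subgroup.commutator_le_left K K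
  have hAidx : A.index = p := by
    have h1 : (Subgroup.comap π A).index = A.index := Subgroup.index_comap_of_surjective A hπs
    rw [← h1, hA, Subgroup.comap_map_eq, QuotientGroup.ker_mk', sup_of_le_left hNK, hK]
  have hab : ∀ x ∈ A, ∀ y ∈ A, x * y = y * x := by
    rintro x hx y hy
    obtain ⟨u, hu, rfl⟩ := hx
    obtain ⟨v, hv, rfl⟩ := hy
    rw [← map_mul, ← map_mul]
    have h1 : ⁅v⁻¹, u⁻¹⁆ ∈ N := Subgroup.commutator_mem_commutator (inv_mem hv) (inv_mem hu)
    have h2 : ((u * v : Γ) : Γ ⧸ N) = ((v * u : Γ) : Γ ⧸ N) := by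
      rw [QuotientGroup.eq]
      have h3 : (u * v)⁻¹ * (v * u) = ⁅v⁻¹, u⁻¹⁆ := by
        simp only [commutatorElement_def]; group
      rw [h3]; exact h1
    exact h2
  have hnonab : ∃ u v : Γ ⧸ N, ⁅u, v⁆ ≠ 1 := by
    rw [_root_.commutator_def, Subgroup.commutator_le] at hne
    push_neg at hne
    obtain ⟨g₁, -, g₂, -, hg⟩ := hne
    refine ⟨π g₁, π g₂, ?_⟩
    intro h
    apply hg
    have h4 : π ⁅g₁, g₂⁆ = 1 := by rw [map_commutatorElement]; exact h
    rwa [hπ, ← MonoidHom.mem_ker, QuotientGroup.ker_mk'] at h4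
  obtain ⟨ρ, hρ⟩ := rep_core (Γ ⧸ N) A hAidx hab hnonab
  set ρΓ : Representation ℂ Γ (((Γ ⧸ N) ⧸ A) → ℂ) := ρ.comp π with hρΓ
  haveI : Fintype ((Γ ⧸ N) ⧸ A) := Fintype.ofFinite _
  have hnz : ∃ v : ((Γ ⧸ N) ⧸ A) → ℂ, v ≠ 0 := by
    refine ⟨fun _ => 1, ?_⟩
    intro h
    have h5 := congrFun h (1 : (Γ ⧸ N) ⧸ A)
    exact one_ne_zero h5
  have hirr : ∀ U : Submodule ℂ (((Γ ⧸ N) ⧸ A) → ℂ),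
      (∀ (g : Γ) (v : ((Γ ⧸ N) ⧸ A) → ℂ), v ∈ U → ρΓ g v ∈ U) → U = ⊥ ∨ U = ⊤ := by
    intro U hUinv
    apply hρ U
    intro q f hf
    obtain ⟨g, rfl⟩ := hπs q
    exact hUinv g f hf
  refine ⟨FDRep.of ρΓ, simple_of_irreducible ρΓ hnz hirr, ?_⟩
  show Module.finrank ℂ (((Γ ⧸ N) ⧸ A) → ℂ) = p
  rw [Module.finrank_fintype_fun_eq_card]
  rw [← Nat.card_eq_fintype_card]
  exact hAidx

end Rest

end Helpers

open scoped commutatorElement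

/-- Let `G` be a finite `p`-group of order at least `p^5` with `|G : G'| ≤ p^3`. If `H` is
a maximal subgroup of `G` having no irreducible complex character of degree `p`, then every
other maximal subgroup `M` of `G` satisfies `|M : M'| ≤ |G : G'|`. -/
theorem stmt13 (p : ℕ) [Fact p.Prime] (G : Type) [Group G] [Finite G]
    (hG : IsPGroup p G) (hcard : p ^ 5 ≤ Nat.card G)
    (hidx : (commutator G).index ≤ p ^ 3)
    (H : Subgroup G) (hH : H.index = p)
    (hchar : ∀ (V : FDRep ℂ H), CategoryTheory.Simple V → Module.finrank ℂ V ≠ p) :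
    ∀ M : Subgroup G, M.index = p → M ≠ H →
      (⁅M, M⁆ : Subgroup G).relIndex M ≤ (commutator G).index := by
  intro M hM hMH
  have hp := (Fact.out : p.Prime)
  haveI hHn : H.Normal := normal_of_index_prime hG H hH
  haveI hMn : M.Normal := normal_of_index_prime hG M hM
  set N : Subgroup G := ⁅M, M⁆ with hNdef
  haveI : N.Normal := Subgroup.commutator_normal M M
  -- Step 1 : ⁅H, H⁆ ≤ ⁅M, M⁆, via the character hypothesis
  have hHle : (⁅H, H⁆ : Subgroup G) ≤ N := by
    by_contra hcon
    set K : Subgroup ↥H := M.subgroupOf H with hKdef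
    haveI : IsPGroup p ↥H := hG.to_subgroup H
    haveI hKn : K.Normal := Subgroup.Normal.subgroupOf hMn H
    have hKidx : K.index = p := by
      have h1 : M.relIndex H ∣ p := hM ▸ Subgroup.relIndex_dvd_index_of_normal M H
      rcases hp.eq_one_or_self_of_dvd _ h1 with h2 | h2
      · exfalso
        have h3 : H ≤ M := Subgroup.relIndex_eq_one.mp h2
        exact hMH (eq_of_le_of_index_eq' h3 (by rw [hH, hM])).symm
      · exact h2
    have hKcomm : ¬ _root_.commutator ↥H ≤ ⁅K, K⁆ := by
      intro hle
      apply hcon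
      have h5 : Subgroup.map H.subtype (_root_.commutator ↥H) = ⁅H, H⁆ := by
        rw [_root_.commutator_def, Subgroup.map_commutator]
        congr 1 <;> rw [← MonoidHom.range_eq_map, Subgroup.subtype_range]
      have h6 : Subgroup.map H.subtype ⁅K, K⁆ = ⁅M ⊓ H, M ⊓ H⁆ := by
        rw [Subgroup.map_commutator, hKdef, Subgroup.subgroupOf_map_subtype]
      calc (⁅H, H⁆ : Subgroup G) = Subgroup.map H.subtype (_root_.commutator ↥H) := h5.symm
        _ ≤ Subgroup.map H.subtype ⁅K, K⁆ := Subgroup.map_mono hle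
        _ = ⁅M ⊓ H, M ⊓ H⁆ := h6
        _ ≤ ⁅M, M⁆ := Subgroup.commutator_mono inf_le_left inf_le_left
    obtain ⟨V, hVs, hVd⟩ := exists_simple_of_comm_not_le ↥H (hG.to_subgroup H) K hKidx hKcomm
    exact hchar V hVs hVd
  -- Step 2 : pass to the quotient by N and bound the commutator there
  set G' : Subgroup G := _root_.commutator G with hG'def
  have hNG' : N ≤ G' := Subgroup.commutator_mono le_top le_top
  have hG'M : G' ≤ M := commutator_le_of_index_prime M hM
  have hG'H : G' ≤ H := commutator_le_of_index_prime H hH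
  have hNH : N ≤ H := le_trans hNG' hG'H
  have hNM : N ≤ M := Subgroup.commutator_le_left M M
  set π : G →* G ⧸ N := QuotientGroup.mk' N with hπdef
  have hπs : Function.Surjective π := QuotientGroup.mk'_surjective N
  set Ab : Subgroup (G ⧸ N) := Subgroup.map π H with hAbdef
  set Bb : Subgroup (G ⧸ N) := Subgroup.map π M with hBbdef
  haveI : Ab.Normal := Subgroup.Normal.map hHn π hπs
  haveI : Bb.Normal := Subgroup.Normal.map hMn π hπs
  have hAbidx : Ab.index = p := by
    have h1 : (Subgroup.comap π Ab).index = Ab.index := Subgroup.index_comap_of_surjective Ab hπs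
    rw [← h1, hAbdef, Subgroup.comap_map_eq, QuotientGroup.ker_mk', sup_of_le_left hNH, hH]
  have hBbidx : Bb.index = p := by
    have h1 : (Subgroup.comap π Bb).index = Bb.index := Subgroup.index_comap_of_surjective Bb hπs
    rw [← h1, hBbdef, Subgroup.comap_map_eq, QuotientGroup.ker_mk', sup_of_le_left hNM, hM]
  have hABne : Ab ≠ Bb := by
    intro h
    have h1 : Subgroup.comap π Ab = Subgroup.comap π Bb := by rw [h]
    rw [hAbdef, hBbdef, Subgroup.comap_map_eq, Subgroup.comap_map_eq, QuotientGroup.ker_mk',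
      sup_of_le_left hNH, sup_of_le_left hNM] at h1
    exact hMH h1.symm
  have hcommim : ∀ (C : Subgroup G), (⁅C, C⁆ : Subgroup G) ≤ N →
      ∀ x ∈ Subgroup.map π C, ∀ y ∈ Subgroup.map π C, x * y = y * x := by
    intro C hC x hx y hy
    obtain ⟨u, hu, rfl⟩ := hx
    obtain ⟨v, hv, rfl⟩ := hy
    rw [← map_mul, ← map_mul]
    have h1 : ⁅v⁻¹, u⁻¹⁆ ∈ N := hC (Subgroup.commutator_mem_commutator (inv_mem hv) (inv_mem hu))
    have h2 : ((u * v : G) : G ⧸ N) = ((v * u : G) : G ⧸ N) := by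
      rw [QuotientGroup.eq]
      have h3 : (u * v)⁻¹ * (v * u) = ⁅v⁻¹, u⁻¹⁆ := by
        simp only [commutatorElement_def]; group
      rw [h3]; exact h1
    exact h2
  have hcard2 : Nat.card (_root_.commutator (G ⧸ N)) ≤ p :=
    two_abelian_maximals inferInstance inferInstance hAbidx hBbidx hABne
      (hcommim H hHle) (hcommim M (le_of_eq rfl))
  -- transfer the bound to `relindex N G'`
  have hmaptop : Subgroup.map π ⊤ = ⊤ := by
    rw [← MonoidHom.range_eq_map]
    exact MonoidHom.range_eq_top_of_surjective π hπs
  have hmap : _root_.commutator (G ⧸ N) = Subgroup.map π G' := by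
    rw [hG'def, _root_.commutator_def, _root_.commutator_def, Subgroup.map_commutator, hmaptop]
  have hindexmap : (Subgroup.map π G').index = G'.index := by
    have h1 : (Subgroup.comap π (Subgroup.map π G')).index = (Subgroup.map π G').index :=
      Subgroup.index_comap_of_surjective _ hπs
    rw [← h1, Subgroup.comap_map_eq, QuotientGroup.ker_mk', sup_of_le_left hNG']
  have hG'ind0 : G'.index ≠ 0 := Subgroup.index_ne_zero_of_finite
  have hrel : N.relIndex G' ≤ p := by
    have h1 : N.relIndex G' * G'.index = N.index := Subgroup.relIndex_mul_index hNG'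
    have h2 : Nat.card (Subgroup.map π G') * (Subgroup.map π G').index = Nat.card (G ⧸ N) :=
      Subgroup.card_mul_index _
    have h3 : N.index = Nat.card (G ⧸ N) := rfl
    rw [hindexmap] at h2
    have h4 : N.relIndex G' * G'.index = Nat.card (Subgroup.map π G') * G'.index := by
      rw [h1, h3, h2]
    have h5 : N.relIndex G' = Nat.card (Subgroup.map π G') :=
      Nat.eq_of_mul_eq_mul_right (Nat.pos_of_ne_zero hG'ind0) h4
    rw [h5, ← hmap]
    exact hcard2
  -- final arithmetic
  have h1 : N.relIndex M = N.relIndex G' * G'.relIndex M :=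
    (Subgroup.relIndex_mul_relIndex N G' M hNG' hG'M).symm
  have h2 : G'.relIndex M * M.index = G'.index := Subgroup.relIndex_mul_index hG'M
  show N.relIndex M ≤ G'.index
  rw [h1, ← h2, hM]
  calc N.relIndex G' * G'.relIndex M ≤ p * G'.relIndex M :=
        Nat.mul_le_mul_right _ hrel
    _ = G'.relIndex M * p := Nat.mul_comm _ _
end

section
/- Let G be a finite 2-group with |G : G'| = 4 and |G| ≥ 8. Then G is of maximal class, and every irreducible complex character of G has degree 1 or 2. -/
open Subgroup
open scoped commutatorElement

section Helpers

variable {G : Type} [Group G]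

private lemma card_two_eq {α : Type*} (h : Nat.card α = 2) {x y z : α} (hx : x ≠ z)
    (hy : y ≠ z) : x = y := by
  by_contra hxy
  have : Finite α := Nat.finite_of_card_ne_zero (by omega)
  have h3 : 3 ≤ Nat.card α := by
    classical
    have : Fintype α := Fintype.ofFinite α
    have hc : ({x, y, z} : Finset α).card = 3 := by
      rw [Finset.card_insert_of_notMem (by simp [hxy, hx]),
        Finset.card_insert_of_notMem (by simp [hy]), Finset.card_singleton]
    calc 3 = ({x, y, z} : Finset α).card := hc.symm
      _ ≤ Nat.card α := by
        rw [Nat.card_eq_fintype_card (α := α)]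
        exact Finset.card_le_univ _
  omega

private lemma coset_decomp (H : Subgroup G) (hH : H.index = 2) {t : G} (ht : t ∉ H)
    (g : G) : g ∈ H ∨ ∃ h ∈ H, g = t * h := by
  by_cases hg : g ∈ H
  · exact Or.inl hg
  · right
    have hcard : Nat.card (G ⧸ H) = 2 := hH
    have h1 : ((t : G ⧸ H)) ≠ ((1 : G) : G ⧸ H) := by
      intro h
      exact ht (by simpa using (QuotientGroup.eq.mp h.symm))
    have h2 : ((g : G ⧸ H)) ≠ ((1 : G) : G ⧸ H) := by
      intro h
      exact hg (by simpa using (QuotientGroup.eq.mp h.symm))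
    have := card_two_eq hcard h1 h2
    have hmem : t⁻¹ * g ∈ H := QuotientGroup.eq.mp this
    exact ⟨t⁻¹ * g, hmem, by group⟩

private lemma zpow_eq_zpow (a : G) {x y : ℤ} (h : (orderOf a : ℤ) ∣ x - y) :
    a ^ x = a ^ y := by
  have : a ^ (x - y) = 1 := orderOf_dvd_iff_zpow_eq_one.mp h
  rw [zpow_sub, mul_inv_eq_one] at this
  exact this

private lemma sq_one_mem {r z : G} (hr : r ^ (2:ℕ) = 1) (hz : z ∈ zpowers r) :
    z = 1 ∨ z = r := by
  obtain ⟨k, rfl⟩ := mem_zpowers_iff.mp hz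
  have h2 : orderOf r ∣ 2 := orderOf_dvd_of_pow_eq_one hr
  have key : r ^ k = r ^ (k % 2) := by
    apply zpow_eq_zpow
    have : (orderOf r : ℤ) ∣ 2 := Int.natCast_dvd_natCast.mpr h2
    exact this.trans ⟨k / 2, by omega⟩
  have : k % 2 = 0 ∨ k % 2 = 1 := by omega
  rcases this with h | h
  · left; rw [key, h, zpow_zero]
  · right; rw [key, h, zpow_one]

private lemma exists_central_involution [Finite G] (hG : IsPGroup 2 G) (N : Subgroup G)
    [N.Normal] (hN : N ≠ ⊥) :
    ∃ r : G, r ∈ N ∧ (∀ g : G, g * r = r * g) ∧ orderOf r = 2 := by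
  haveI : Fact (Nat.Prime 2) := ⟨by norm_num⟩
  -- the conjugation action of ConjAct G on N
  have hC : IsPGroup 2 (ConjAct G) := hG.of_equiv ConjAct.toConjAct
  have key := hC.card_modEq_card_fixedPoints (α := N)
  have hNp : IsPGroup 2 N := hG.to_subgroup N
  obtain ⟨k, hk⟩ := (IsPGroup.iff_card).mp hNp
  have hNnt : Nontrivial N := by
    rw [← Subgroup.nontrivial_iff_ne_bot] at hN; exact hN
  have hk1 : 1 ≤ k := by
    rcases Nat.eq_zero_or_pos k with h | h
    · exfalso
      subst h
      rw [pow_zero] at hk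
      have := Nat.card_eq_one_iff_unique.mp hk
      exact not_subsingleton_iff_nontrivial.mpr hNnt this.1
    · exact h
  have heven : Nat.card N % 2 = 0 := by
    rw [hk]
    have : 2 ∣ 2 ^ k := dvd_pow_self 2 (by omega)
    omega
  have hfp_even : Nat.card (MulAction.fixedPoints (ConjAct G) N) % 2 = 0 := by
    have := key.symm.trans (Nat.ModEq.refl _)
    unfold Nat.ModEq at key
    omega
  -- 1 is a fixed point
  have h1fix : (1 : N) ∈ MulAction.fixedPoints (ConjAct G) N := by
    intro g
    apply Subtype.ext
    rw [ConjAct.Subgroup.val_conj_smul]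
    simp
  have hfin : Finite (MulAction.fixedPoints (ConjAct G) N) := Subtype.finite
  have hpos : 0 < Nat.card (MulAction.fixedPoints (ConjAct G) N) :=
    Nat.card_pos_iff.mpr ⟨⟨⟨1, h1fix⟩⟩, hfin⟩
  have h2le : 2 ≤ Nat.card (MulAction.fixedPoints (ConjAct G) N) := by omega
  have hnt : Nontrivial (MulAction.fixedPoints (ConjAct G) N) :=
    Finite.one_lt_card_iff_nontrivial.mp (by omega)
  obtain ⟨x, y, hxy⟩ := hnt
  have : (x : N) ≠ 1 ∨ (y : N) ≠ 1 := by
    by_contra h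
    push_neg at h
    exact hxy (Subtype.ext (h.1.trans h.2.symm))
  -- get a nontrivial central element of N
  obtain ⟨z, hzfix, hz1⟩ : ∃ z : N, z ∈ MulAction.fixedPoints (ConjAct G) N ∧ (z : N) ≠ 1 := by
    rcases this with h | h
    · exact ⟨x, x.2, h⟩
    · exact ⟨y, y.2, h⟩
  have hzcent : ∀ g : G, g * (z : G) = (z : G) * g := by
    intro g
    have h0 := hzfix (ConjAct.toConjAct g)
    have hval : g * (z:G) * g⁻¹ = (z:G) := by
      have := congrArg (Subtype.val) h0
      rw [ConjAct.Subgroup.val_conj_smul] at this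
      simpa [ConjAct.smul_def] using this
    calc g * (z : G) = g * z * g⁻¹ * g := by group
      _ = (z:G) * g := by rw [hval]
  -- now take an appropriate power to get order 2
  obtain ⟨j, hj⟩ := (IsPGroup.iff_orderOf.mp hG) (z : G)
  have hj1 : 1 ≤ j := by
    rcases Nat.eq_zero_or_pos j with h | h
    · subst h
      simp at hj
      exact absurd hj hz1
    · exact h
  refine ⟨(z : G) ^ (2 ^ (j - 1)), ?_, ?_, ?_⟩
  · exact pow_mem z.2 _
  · intro g
    have hc : Commute g ((z:G)) := hzcent g
    exact (hc.pow_right _).eq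
  · apply orderOf_eq_prime
    · rw [← pow_mul]
      have : 2 ^ (j-1) * 2 = 2 ^ j := by
        rw [← pow_succ]
        congr 1
        omega
      rw [this, ← hj]
      exact pow_orderOf_eq_one _
    · intro h
      have := orderOf_dvd_of_pow_eq_one h
      rw [hj] at this
      have : 2 ^ j ≤ 2 ^ (j-1) := Nat.le_of_dvd (by positivity) this
      have h2 : 2 ^ (j-1) < 2 ^ j := Nat.pow_lt_pow_right (by omega) (by omega)
      omega

private lemma int_lemma {n : ℕ} (hn : 4 ≤ n) {m : ℤ}
    (h1 : (2:ℤ)^(n-1) ∣ m^2 - 1) (h2 : ¬ (2:ℤ)^(n-2) ∣ m - 1) :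
    (2:ℤ)^(n-2) ∣ m + 1 ∧ ¬ (2:ℤ)^(n-1) ∣ m - 1 := by
  constructor
  · have hmodd : Odd m := by
      rcases Int.even_or_odd m with he | ho
      · exfalso
        obtain ⟨c, hc⟩ := he
        have h2d : (2:ℤ) ∣ m ^ 2 - 1 :=
          dvd_trans (dvd_pow_self 2 (show n - 1 ≠ 0 by omega)) h1
        obtain ⟨d, hd⟩ := h2d
        have hsq : m ^ 2 = 4 * (c * c) := by rw [hc]; ring
        rw [hsq] at hd
        omega
      · exact ho
    obtain ⟨c0, hc0⟩ := hmodd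
    obtain ⟨α, hα⟩ : ∃ α : ℤ, m - 1 = 2 * α := ⟨c0, by omega⟩
    have hβ : m + 1 = 2 * (α + 1) := by omega
    have hd : (2:ℤ)^(n-3) ∣ α * (α+1) := by
      have hmm : m^2 - 1 = 4 * (α * (α + 1)) := by
        have hfac : m^2 - 1 = (m-1)*(m+1) := by ring
        rw [hfac, hα, hβ]
        ring
      have h4 : (2:ℤ)^(n-1) = 4 * 2^(n-3) := by
        have : n - 1 = (n - 3) + 2 := by omega
        rw [this, pow_add]
        ring
      rw [hmm, h4] at h1
      exact (mul_dvd_mul_iff_left (by norm_num : (4:ℤ) ≠ 0)).mp h1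
    -- consecutive integers: 2^(n-3) divides α or α+1
    rcases Int.even_or_odd α with he | ho
    · -- α even, so α+1 odd; show 2^(n-3) ∣ α, contradiction with h2
      exfalso
      have hcop : IsCoprime ((2:ℤ)^(n-3)) (α+1) := by
        apply IsCoprime.pow_left
        obtain ⟨c, hc⟩ := he
        refine ⟨-c, 1, ?_⟩
        have : α + 1 = 2*c + 1 := by omega
        rw [this]
        ring
      have : (2:ℤ)^(n-3) ∣ α := hcop.dvd_of_dvd_mul_right hd
      apply h2
      obtain ⟨c, hc⟩ := this
      refine ⟨c, ?_⟩
      rw [hα, hc]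
      have : (2:ℤ)^(n-2) = 2 * 2^(n-3) := by
        rw [← pow_succ']
        congr 1
        omega
      rw [this]
      ring
    · -- α odd: 2^(n-3) ∣ α + 1
      have hcop : IsCoprime ((2:ℤ)^(n-3)) α := by
        apply IsCoprime.pow_left
        obtain ⟨c, hc⟩ := ho
        refine ⟨-c, 1, ?_⟩
        rw [hc]
        ring
      have : (2:ℤ)^(n-3) ∣ α + 1 := hcop.dvd_of_dvd_mul_left hd
      obtain ⟨c, hc⟩ := this
      refine ⟨c, ?_⟩
      rw [hβ, hc]
      have : (2:ℤ)^(n-2) = 2 * 2^(n-3) := by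
        rw [← pow_succ']
        congr 1
        omega
      rw [this]
      ring
  · intro h
    apply h2
    exact dvd_trans (pow_dvd_pow 2 (show n-2 ≤ n-1 by omega)) h

private lemma odd_part {n : ℕ} (hn : 3 ≤ n) {s : ℤ}
    (h1 : (2:ℤ)^(n-2) ∣ s + 1) (h2 : ¬ (2:ℤ)^(n-1) ∣ s - 1) :
    ∃ u : ℤ, Odd u ∧ s - 1 = 2 * u := by
  obtain ⟨k, hk⟩ := h1
  by_cases h4 : 4 ≤ n
  · refine ⟨2^(n-3)*k - 1, ⟨2^(n-4)*k - 1, ?_⟩, ?_⟩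
    · have : (2:ℤ)^(n-3) = 2 * 2^(n-4) := by
        rw [← pow_succ']; congr 1; omega
      rw [this]; ring
    · have : (2:ℤ)^(n-2) = 2 * 2^(n-3) := by
        rw [← pow_succ']; congr 1; omega
      rw [this, mul_assoc] at hk
      omega
  · -- n = 3
    have hn3 : n = 3 := by omega
    subst hn3
    simp only [show (3:ℕ)-2 = 1 by rfl, pow_one] at hk
    refine ⟨k - 1, ?_, by omega⟩
    rcases Int.even_or_odd (k-1) with he | ho
    · exfalso
      apply h2
      obtain ⟨c, hc⟩ := he
      simp only [show (3:ℕ)-1 = 2 by rfl]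
      refine ⟨c, by omega⟩
    · exact ho

end Helpers

section Struct

variable {G : Type} [Group G] [Finite G]

private lemma decomp {n : ℕ} (hcard : Nat.card G = 2 ^ n) {a : G}
    (ha : orderOf a = 2 ^ (n-1)) (hn : 1 ≤ n) {t : G} (ht : t ∉ zpowers a) (g : G) :
    (∃ i : ℤ, g = a ^ i) ∨ (∃ i : ℤ, g = t * a ^ i) := by
  have hidx : (zpowers a).index = 2 := by
    have h1 : Nat.card (zpowers a) * (zpowers a).index = 2 ^ n :=
      (Subgroup.card_mul_index _).trans hcard
    rw [Nat.card_zpowers, ha] at h1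
    have h2 : (2:ℕ) ^ n = 2^(n-1) * 2 := by rw [← pow_succ]; congr 1; omega
    rw [h2] at h1
    exact Nat.eq_of_mul_eq_mul_left (by positivity) h1
  rcases coset_decomp _ hidx ht g with h | ⟨h, hmem, rfl⟩
  · obtain ⟨i, hi⟩ := mem_zpowers_iff.mp h
    exact Or.inl ⟨i, hi.symm⟩
  · obtain ⟨i, hi⟩ := mem_zpowers_iff.mp hmem
    exact Or.inr ⟨i, by rw [hi]⟩

private lemma comm_eq {n : ℕ} (hn : 2 ≤ n) (hcard : Nat.card G = 2 ^ n) {a t : G} {m : ℤ}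
    (ha : orderOf a = 2 ^ (n-1)) (ht : t ∉ zpowers a) (hconj : t * a * t⁻¹ = a ^ m) :
    commutator G = zpowers (a ^ (m - 1)) ∧ ((2:ℤ))^(n-1) ∣ m^2 - 1 ∧
      t * t ∈ zpowers a ∧ t⁻¹ * a * t = a ^ m ∧
      (∀ mm : ℤ, ⁅(zpowers (a^mm) : Subgroup G), (⊤ : Subgroup G)⁆
        = zpowers (a ^ (mm * (m-1)))) := by
  have hdec := decomp hcard ha (by omega) ht
  have horder : ((orderOf a : ℕ) : ℤ) = (2:ℤ)^(n-1) := by rw [ha]; push_cast; ring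
  -- t*t ∈ zpowers a
  have ht2 : t * t ∈ zpowers a := by
    rcases hdec (t*t) with ⟨i, hi⟩ | ⟨i, hi⟩
    · rw [hi]; exact zpow_mem (mem_zpowers a) i
    · exfalso; apply ht
      have : t = a ^ i := by
        have := mul_left_cancel hi
        exact this
      rw [this]; exact zpow_mem (mem_zpowers a) i
  obtain ⟨e, he⟩ := mem_zpowers_iff.mp ht2
  -- conjugation formulas
  have hconj_pow : ∀ i : ℤ, t * a^i * t⁻¹ = a^(i*m) := by
    intro i
    have h1 : (MulAut.conj t) (a^i) = ((MulAut.conj t) a)^i := map_zpow _ _ _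
    simp only [MulAut.conj_apply] at h1
    rw [h1, hconj, ← zpow_mul, mul_comm]
  -- m^2 ≡ 1
  have hm2 : a ^ (m*m) = a := by
    have h2 : t * (t * a * t⁻¹) * t⁻¹ = a^(m*m) := by rw [hconj]; exact hconj_pow m
    calc a^(m*m) = t * (t*a*t⁻¹) * t⁻¹ := h2.symm
      _ = (t*t) * a * (t*t)⁻¹ := by group
      _ = a^e * a * (a^e)⁻¹ := by rw [he]
      _ = a := by group
  have hdvd2 : ((2:ℤ))^(n-1) ∣ m^2 - 1 := by
    rw [← horder]
    rw [orderOf_dvd_iff_zpow_eq_one]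
    rw [zpow_sub, zpow_one, mul_inv_eq_one]
    rw [show m^2 = m*m by ring]
    exact hm2
  -- inverse conjugation
  have hconjinv : t⁻¹ * a * t = a ^ m := by
    rcases hdec (t⁻¹ * a * t) with ⟨j, hj⟩ | ⟨j, hj⟩
    · -- a = t * a^j * t⁻¹ = a^(j*m)
      have h1 : a = a ^ (j*m) := by
        calc a = t * (t⁻¹ * a * t) * t⁻¹ := by group
          _ = t * a^j * t⁻¹ := by rw [hj]
          _ = a^(j*m) := hconj_pow j
      have hd1 : ((orderOf a : ℕ) : ℤ) ∣ j*m - 1 := by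
        rw [orderOf_dvd_iff_zpow_eq_one, zpow_sub, zpow_one]
        rw [← h1, mul_inv_cancel]
      have hd2 : ((orderOf a : ℕ) : ℤ) ∣ m*m - 1 := by
        rw [horder]; rw [show m*m - 1 = m^2 - 1 by ring]; exact hdvd2
      rw [hj]
      apply zpow_eq_zpow
      have : j - m = j*(1 - m*m) + m*(j*m - 1) := by ring
      rw [this]
      exact dvd_add (Dvd.dvd.mul_left (by simpa [dvd_neg] using (dvd_neg.mpr hd2) : (orderOf a : ℤ) ∣ 1 - m*m) j) (Dvd.dvd.mul_left hd1 m)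
    · exfalso; apply ht
      -- t⁻¹ * a * t = t * a^j  ⟹  t = a⁻¹ * (t*t) * a^j
      have h1 : t = a⁻¹ * (t*t) * a^j := by
        have h2 : a * t = t * (t * a^j) := by
          calc a * t = t * (t⁻¹ * a * t) := by group
            _ = t * (t * a^j) := by rw [hj]
        calc t = a⁻¹ * (a * t) := by group
          _ = a⁻¹ * (t * (t * a^j)) := by rw [h2]
          _ = a⁻¹ * (t*t) * a^j := by group
      rw [h1]
      exact mul_mem (mul_mem (inv_mem (mem_zpowers a)) ht2) (zpow_mem (mem_zpowers a) j)
  have hconjinv_pow : ∀ i : ℤ, t⁻¹ * a^i * t = a^(i*m) := by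
    intro i
    have h1 : (MulAut.conj t⁻¹) (a^i) = ((MulAut.conj t⁻¹) a)^i := map_zpow _ _ _
    simp only [MulAut.conj_apply, inv_inv] at h1
    rw [h1, hconjinv, ← zpow_mul, mul_comm]
  refine ⟨?_, hdvd2, ht2, hconjinv, ?_⟩
  · -- commutator G = zpowers (a^(m-1))
    apply le_antisymm
    · rw [_root_.commutator_def, Subgroup.commutator_le]
      intro g1 _ g2 _
      rcases hdec g1 with ⟨i, rfl⟩ | ⟨i, rfl⟩ <;> rcases hdec g2 with ⟨j, rfl⟩ | ⟨j, rfl⟩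
      · have : ⁅a^i, a^j⁆ = 1 := by
          rw [commutatorElement_eq_one_iff_commute]
          exact Commute.zpow_zpow (Commute.refl a) _ _
        rw [this]; exact one_mem _
      · have hval : ⁅a^i, t*a^j⁆ = a^(i*(1-m)) := by
          calc ⁅a^i, t*a^j⁆ = a^i * (t * a^(-i) * t⁻¹) := by
                rw [commutatorElement_def]; group
            _ = a^i * a^(-i*m) := by rw [hconj_pow]
            _ = a^(i*(1-m)) := by rw [← zpow_add]; congr 1; ring
        rw [hval]
        exact mem_zpowers_iff.mpr ⟨-i, by rw [← zpow_mul]; congr 1; ring⟩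
      · have hval : ⁅t*a^i, a^j⁆ = a^(j*(m-1)) := by
          calc ⁅t*a^i, a^j⁆ = (t * a^j * t⁻¹) * a^(-j) := by
                rw [commutatorElement_def]; group
            _ = a^(j*m) * a^(-j) := by rw [hconj_pow]
            _ = a^(j*(m-1)) := by rw [← zpow_add]; congr 1; ring
        rw [hval]
        exact mem_zpowers_iff.mpr ⟨j, by rw [← zpow_mul]; congr 1; ring⟩
      · have huv : (t*a^i) * (t*a^j) = (t*t) * a^(i*m + j) := by
          calc (t*a^i)*(t*a^j) = t * (t * (t⁻¹ * a^i * t)) * a^j := by group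
            _ = t * (t * a^(i*m)) * a^j := by rw [hconjinv_pow i]
            _ = (t*t) * a^(i*m+j) := by rw [zpow_add]; group
        have hvu : (t*a^j) * (t*a^i) = (t*t) * a^(j*m + i) := by
          calc (t*a^j)*(t*a^i) = t * (t * (t⁻¹ * a^j * t)) * a^i := by group
            _ = t * (t * a^(j*m)) * a^i := by rw [hconjinv_pow j]
            _ = (t*t) * a^(j*m+i) := by rw [zpow_add]; group
        have hval : ⁅t*a^i, t*a^j⁆ = a^((i-j)*(m-1)) := by
          calc ⁅t*a^i, t*a^j⁆
              = ((t*a^i) * (t*a^j)) * ((t*a^j) * (t*a^i))⁻¹ := by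
                rw [commutatorElement_def]; group
            _ = ((t*t) * a^(i*m+j)) * ((t*t) * a^(j*m+i))⁻¹ := by rw [huv, hvu]
            _ = (t*t) * a^((i*m+j) - (j*m+i)) * (t*t)⁻¹ := by
                rw [zpow_sub]; group
            _ = a^e * a^((i*m+j) - (j*m+i)) * (a^e)⁻¹ := by rw [he]
            _ = a^((i-j)*(m-1)) := by
                rw [← zpow_neg, ← zpow_add, ← zpow_add]; congr 1; ring
        rw [hval]
        exact mem_zpowers_iff.mpr ⟨i-j, by rw [← zpow_mul]; congr 1; ring⟩
    · rw [Subgroup.zpowers_le]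
      have hval : a^(m-1) = ⁅t, a⁆ := by
        calc a^(m-1) = a^m * a⁻¹ := by rw [zpow_sub, zpow_one]
          _ = (t * a * t⁻¹) * a⁻¹ := by rw [hconj]
          _ = ⁅t, a⁆ := by rw [commutatorElement_def]
      rw [_root_.commutator_def, hval]
      exact Subgroup.commutator_mem_commutator (mem_top t) (mem_top a)
  · -- the lower-central-series step
    intro mm
    apply le_antisymm
    · rw [Subgroup.commutator_le]
      intro g1 hg1 g2 _
      obtain ⟨i, hi⟩ := mem_zpowers_iff.mp hg1
      have hg1' : g1 = a^(mm*i) := by rw [← hi, ← zpow_mul]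
      subst hg1'
      rcases hdec g2 with ⟨j, rfl⟩ | ⟨j, rfl⟩
      · have : ⁅a^(mm*i), a^j⁆ = 1 := by
          rw [commutatorElement_eq_one_iff_commute]
          exact Commute.zpow_zpow (Commute.refl a) _ _
        rw [this]; exact one_mem _
      · have hval : ⁅a^(mm*i), t*a^j⁆ = a^(mm*i*(1-m)) := by
          calc ⁅a^(mm*i), t*a^j⁆ = a^(mm*i) * (t * a^(-(mm*i)) * t⁻¹) := by
                rw [commutatorElement_def]; group
            _ = a^(mm*i) * a^(-(mm*i)*m) := by rw [hconj_pow]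
            _ = a^(mm*i*(1-m)) := by rw [← zpow_add]; congr 1; ring
        rw [hval]
        exact mem_zpowers_iff.mpr ⟨-i, by rw [← zpow_mul]; congr 1; ring⟩
    · rw [Subgroup.zpowers_le]
      have hval : a^(mm*(m-1)) = ⁅a^mm, t⁆⁻¹ := by
        have h2 : ⁅a^mm, t⁆ = a^(mm*(1-m)) := by
          calc ⁅a^mm, t⁆ = a^mm * (t * a^(-mm) * t⁻¹) := by
                rw [commutatorElement_def]; group
            _ = a^mm * a^(-mm*m) := by rw [hconj_pow]
            _ = a^(mm*(1-m)) := by rw [← zpow_add]; congr 1; ring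
        rw [h2, ← zpow_neg]; congr 1; ring
      rw [hval]
      exact inv_mem (Subgroup.commutator_mem_commutator (mem_zpowers _) (Subgroup.mem_top t))

end Struct

set_option maxHeartbeats 1000000 in
private theorem keyStruct : ∀ (n : ℕ), 3 ≤ n → ∀ (G : Type) [Group G] [Finite G],
    IsPGroup 2 G → (commutator G).index = 4 → Nat.card G = 2 ^ n →
    ∃ (a t : G) (s : ℤ), orderOf a = 2 ^ (n-1) ∧ t ∉ zpowers a ∧
      t * a * t⁻¹ = a ^ s ∧ ((2:ℤ)^(n-2) ∣ s + 1) ∧ ¬ ((2:ℤ)^(n-1) ∣ s - 1) := by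
  intro n hn
  induction n, hn using Nat.le_induction with
  | base =>
    intro G _ _ hG hidx hcard
    -- G is nonabelian of order 8
    have hnab : ¬ (∀ x y : G, x * y = y * x) := by
      intro hab
      have hbot : commutator G = ⊥ := by
        rw [_root_.commutator_def, eq_bot_iff]
        rw [Subgroup.commutator_le]
        intro g1 _ g2 _
        rw [Subgroup.mem_bot, commutatorElement_eq_one_iff_commute]
        exact hab g1 g2
      rw [hbot, Subgroup.index_bot, hcard] at hidx
      norm_num at hidx
    -- element orders are powers of 2 at most 8
    have horders : ∀ x : G, ∃ k ≤ 3, orderOf x = 2 ^ k := by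
      intro x
      have : orderOf x ∣ 2 ^ 3 := hcard ▸ orderOf_dvd_natCard x
      exact (Nat.dvd_prime_pow Nat.prime_two).mp this
    have hno8 : ∀ x : G, orderOf x ≠ 8 := by
      intro x hx
      apply hnab
      have htop : zpowers x = ⊤ := by
        have h1 : Nat.card (zpowers x) = Nat.card G := by
          rw [Nat.card_zpowers, hx, hcard]; norm_num
        exact Subgroup.eq_top_of_card_eq _ h1
      intro g1 g2
      have hg1 : g1 ∈ zpowers x := htop ▸ Subgroup.mem_top g1
      have hg2 : g2 ∈ zpowers x := htop ▸ Subgroup.mem_top g2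
      obtain ⟨i, rfl⟩ := mem_zpowers_iff.mp hg1
      obtain ⟨j, rfl⟩ := mem_zpowers_iff.mp hg2
      exact (Commute.zpow_zpow (Commute.refl x) i j).eq
    have hex4 : ∃ a : G, orderOf a = 4 := by
      by_contra hno4
      push_neg at hno4
      have hsq : ∀ z : G, z * z = 1 := by
        intro z
        obtain ⟨k, hk3, hk⟩ := horders z
        have : orderOf z ∣ 2 := by
          interval_cases k
          · rw [hk]; norm_num
          · rw [hk]; norm_num
          · exact absurd hk (by rw [show (2:ℕ)^2 = 4 by norm_num]; exact hno4 z)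
          · exact absurd hk (by rw [show (2:ℕ)^3 = 8 by norm_num]; exact hno8 z)
        have := orderOf_dvd_iff_pow_eq_one.mp this
        rwa [pow_two] at this
      apply hnab
      intro x y
      have hz : ∀ z : G, z⁻¹ = z := fun z => inv_eq_of_mul_eq_one_right (hsq z)
      have h1 : x * y = (x*y)⁻¹ := (hz _).symm
      rw [mul_inv_rev, hz x, hz y] at h1
      exact h1
    obtain ⟨a, ha4⟩ := hex4
    have ha : orderOf a = 2 ^ (3-1) := by rw [ha4]; norm_num
    have hex_t : ∃ t : G, t ∉ zpowers a := by
      by_contra hall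
      push_neg at hall
      have htop : zpowers a = ⊤ := (Subgroup.eq_top_iff' _).mpr hall
      have : Nat.card (zpowers a) = Nat.card G := by
        rw [htop, Subgroup.card_top]
      rw [Nat.card_zpowers, ha4, hcard] at this
      norm_num at this
    obtain ⟨t, ht⟩ := hex_t
    have hdec := decomp hcard ha (by norm_num) ht
    obtain ⟨m, hm⟩ : ∃ m : ℤ, t * a * t⁻¹ = a ^ m := by
      rcases hdec (t * a * t⁻¹) with ⟨i, hi⟩ | ⟨i, hi⟩
      · exact ⟨i, hi⟩
      · exfalso
        apply ht
        have h1 : a * t⁻¹ = a ^ i := by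
          have := hi
          rw [mul_assoc] at this
          exact mul_left_cancel this
        have h2 : t⁻¹ = a⁻¹ * a ^ i := by
          rw [← h1]; group
        rw [← inv_mem_iff (H := zpowers a), h2]
        exact mul_mem (inv_mem (mem_zpowers a)) (zpow_mem (mem_zpowers a) i)
    obtain ⟨hcomm, hdvd2, ht2, hconjinv, hgamma⟩ := comm_eq (by norm_num) hcard ha ht hm
    -- the commutator subgroup has order 2
    have hcardcomm : Nat.card (commutator G) = 2 := by
      have h1 : Nat.card (commutator G) * 4 = 8 := by
        rw [← hidx, Subgroup.card_mul_index, hcard]; norm_num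
      omega
    have hord_g : orderOf (a ^ (m-1)) = 2 := by
      rw [hcomm, Nat.card_zpowers] at hcardcomm
      exact hcardcomm
    -- extract divisibilities
    have hne : a ^ (m - 1) ≠ 1 := by
      intro h
      rw [h] at hord_g
      simp at hord_g
    have hsq1 : (a ^ (m-1)) ^ (2:ℕ) = 1 := by
      rw [← hord_g]; exact pow_orderOf_eq_one _
    have hd1 : ((4:ℤ)) ∣ (m-1) * 2 := by
      have : a ^ ((m-1) * 2) = 1 := by
        rw [zpow_mul]
        rw [show ((2:ℤ)) = ((2:ℕ):ℤ) by norm_num, zpow_natCast]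
        exact hsq1
      have h2 := orderOf_dvd_iff_zpow_eq_one.mpr this
      rwa [ha4, show ((4:ℕ):ℤ) = 4 by norm_num] at h2
    have hd2 : ¬ ((4:ℤ)) ∣ (m-1) := by
      intro h
      apply hne
      apply orderOf_dvd_iff_zpow_eq_one.mp
      rwa [ha4, show ((4:ℕ):ℤ) = 4 by norm_num]
    refine ⟨a, t, m, ha, ht, hm, ?_, ?_⟩
    · show (2:ℤ)^(3-2) ∣ m + 1
      norm_num
      obtain ⟨c, hc⟩ := hd1
      exact ⟨c + 1, by omega⟩
    · show ¬ (2:ℤ)^(3-1) ∣ m - 1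
      norm_num
      exact hd2
  | succ n hn ih =>
    intro G _ _ hG hidx hcard
    haveI : Fact (Nat.Prime 2) := ⟨by norm_num⟩
    -- commutator has order 2^(n-1)
    have hcardcomm : Nat.card (commutator G) = 2 ^ (n-1) := by
      have h1 : Nat.card (commutator G) * 4 = 2^(n+1) := by
        rw [← hidx, Subgroup.card_mul_index, hcard]
      have h2 : (2:ℕ)^(n+1) = 2^(n-1) * 4 := by
        rw [show (4:ℕ) = 2^2 by norm_num, ← pow_add]
        congr 1
        omega
      rw [h2] at h1
      exact Nat.eq_of_mul_eq_mul_right (by norm_num) h1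
    have hcommbot : commutator G ≠ ⊥ := by
      intro h
      rw [h, Subgroup.card_bot] at hcardcomm
      have : (2:ℕ)^(n-1) ≥ 2 := by
        calc (2:ℕ)^(n-1) ≥ 2^1 := Nat.pow_le_pow_right (by norm_num) (by omega)
          _ = 2 := by norm_num
      omega
    obtain ⟨r, hrN, hrcent, hrord⟩ := exists_central_involution hG (commutator G) hcommbot
    have hr2 : r ^ (2:ℕ) = 1 := by rw [← hrord]; exact pow_orderOf_eq_one r
    haveI hRnorm : (zpowers r).Normal := by
      constructor
      intro x hx g
      obtain ⟨k, rfl⟩ := mem_zpowers_iff.mp hx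
      have hc : Commute g (r ^ k) := (show Commute g r from hrcent g).zpow_right k
      have : g * r ^ k * g⁻¹ = r ^ k := by
        rw [hc.eq]; group
      rw [this]
      exact zpow_mem (mem_zpowers r) k
    set R := zpowers r with hR
    let π : G →* G ⧸ R := QuotientGroup.mk' R
    have hsurj : Function.Surjective π := QuotientGroup.mk'_surjective R
    haveI : Finite (G ⧸ R) := Quotient.finite _
    have hGq : IsPGroup 2 (G ⧸ R) := hG.to_quotient R
    have hcardR : Nat.card R = 2 := by rw [hR, Nat.card_zpowers, hrord]
    have hcardQ : Nat.card (G ⧸ R) = 2 ^ n := by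
      have h1 := Subgroup.card_eq_card_quotient_mul_card_subgroup R
      rw [hcard, hcardR] at h1
      have h2 : (2:ℕ)^(n+1) = 2^n * 2 := by rw [← pow_succ]
      rw [h2] at h1
      exact (Nat.eq_of_mul_eq_mul_right (by norm_num) h1.symm)
    have hmapcomm : (commutator G).map π = commutator (G ⧸ R) := by
      rw [_root_.commutator_def, _root_.commutator_def, Subgroup.map_commutator,
        Subgroup.map_top_of_surjective _ hsurj]
    have hidxQ : (commutator (G ⧸ R)).index = 4 := by
      have hker : π.ker ≤ commutator G := by
        rw [QuotientGroup.ker_mk']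
        exact Subgroup.zpowers_le.mpr hrN
      have heq := Subgroup.index_map_eq (H := commutator G) (f := π) hsurj hker
      rw [← hmapcomm, heq]
      exact hidx
    obtain ⟨ab, tb, sb, habord, htb, hconjb, hdvd1b, hdvd2b⟩ := ih (G ⧸ R) hGq hidxQ hcardQ
    obtain ⟨a, ha⟩ := hsurj ab
    -- a^(2^(n-1)) lies in R
    have hpow_mem : a ^ ((2:ℕ) ^ (n-1)) ∈ R := by
      have h1 : π (a ^ ((2:ℕ)^(n-1))) = 1 := by
        rw [map_pow, ha, ← habord]
        exact pow_orderOf_eq_one ab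
      rw [← QuotientGroup.ker_mk' R]
      exact h1
    have hpow_cases : a ^ ((2:ℕ)^(n-1)) = 1 ∨ a ^ ((2:ℕ)^(n-1)) = r :=
      sq_one_mem hr2 hpow_mem
    have hord_dvd : orderOf a ∣ 2 ^ n := by
      apply orderOf_dvd_of_pow_eq_one
      have h1 : a ^ ((2:ℕ)^n) = (a ^ ((2:ℕ)^(n-1)))^(2:ℕ) := by
        rw [← pow_mul]
        congr 1
        rw [← pow_succ]
        congr 1
        omega
      rcases hpow_cases with h | h
      · rw [h1, h]; norm_num
      · rw [h1, h]; exact hr2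
    have hord_mult : (2:ℕ)^(n-1) ∣ orderOf a := by
      rw [← habord, ← ha]
      exact orderOf_map_dvd π a
    obtain ⟨k, hkn, hoa⟩ := (Nat.dvd_prime_pow Nat.prime_two).mp hord_dvd
    have hk_ge : n - 1 ≤ k := by
      rw [hoa] at hord_mult
      exact (Nat.pow_dvd_pow_iff_le_right (by norm_num)).mp hord_mult
    by_cases hkcase : k = n
    · -- Case A : a has order 2^n
      have haord : orderOf a = 2 ^ n := by rw [hoa, hkcase]
      obtain ⟨t, htl⟩ := hsurj tb
      have ht : t ∉ zpowers a := by
        intro hmem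
        obtain ⟨i, hi⟩ := mem_zpowers_iff.mp hmem
        apply htb
        rw [← htl, ← hi, map_zpow, ha]
        exact zpow_mem (mem_zpowers ab) i
      have haord' : orderOf a = 2 ^ ((n+1)-1) := by rwa [Nat.add_sub_cancel]
      have hdecG := decomp hcard haord' (by omega) ht
      obtain ⟨m, hm⟩ : ∃ m : ℤ, t * a * t⁻¹ = a ^ m := by
        rcases hdecG (t * a * t⁻¹) with ⟨i, hi⟩ | ⟨i, hi⟩
        · exact ⟨i, hi⟩
        · exfalso
          apply ht
          have h1 : a * t⁻¹ = a ^ i := by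
            have := hi
            rw [mul_assoc] at this
            exact mul_left_cancel this
          have h2 : t⁻¹ = a⁻¹ * a ^ i := by rw [← h1]; group
          rw [← inv_mem_iff (H := zpowers a), h2]
          exact mul_mem (inv_mem (mem_zpowers a)) (zpow_mem (mem_zpowers a) i)
      obtain ⟨hcomm, hdvd2, ht2, hconjinv, hgamma⟩ :=
        comm_eq (by omega) hcard haord' ht hm
      -- m ≡ sb mod 2^(n-1)
      have hmsb : (2:ℤ)^(n-1) ∣ m - sb := by
        have h1 : ab ^ m = ab ^ sb := by
          calc ab ^ m = π (a ^ m) := by rw [map_zpow, ha]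
            _ = π (t * a * t⁻¹) := by rw [hm]
            _ = tb * ab * tb⁻¹ := by
                rw [map_mul, map_mul, map_inv, ha, htl]
            _ = ab ^ sb := hconjb
        have h2 : ab ^ (m - sb) = 1 := by
          rw [zpow_sub, h1, mul_inv_cancel]
        have h3 := orderOf_dvd_iff_zpow_eq_one.mpr h2
        rwa [habord, Nat.cast_pow, Nat.cast_ofNat] at h3
      have hnot1 : ¬ (2:ℤ)^(n-1) ∣ m - 1 := by
        intro h
        apply hdvd2b
        have : sb - 1 = (m - 1) - (m - sb) := by ring
        rw [this]
        exact dvd_sub h hmsb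
      have hdvd2' : (2:ℤ)^((n+1)-1) ∣ m^2 - 1 := by
        rwa [Nat.add_sub_cancel]
      have hint := int_lemma (n := n+1) (by omega) hdvd2' (by
        rwa [show (n+1)-2 = n-1 by omega])
      exact ⟨a, t, m, haord', ht, hm, hint.1, hint.2⟩
    · -- Case B : a has order 2^(n-1); derive a contradiction
      exfalso
      have haord : orderOf a = 2 ^ (n-1) := by
        have hk : k = n - 1 := by omega
        rw [hoa, hk]
      have hasq : a ^ ((2:ℕ)^(n-1)) = 1 := by
        rw [← haord]; exact pow_orderOf_eq_one a
      obtain ⟨t, htl⟩ := hsurj tb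
      set H : Subgroup G := Subgroup.comap π (zpowers ab) with hHdef
      have haH : a ∈ H := by
        rw [hHdef, Subgroup.mem_comap, ha]
        exact mem_zpowers ab
      have hπr : π r = 1 := (QuotientGroup.eq_one_iff r).mpr (mem_zpowers r)
      have hrH : r ∈ H := by
        rw [hHdef, Subgroup.mem_comap, hπr]
        exact one_mem _
      have htH : t ∉ H := by
        intro hmem
        apply htb
        rw [← htl]
        exact Subgroup.mem_comap.mp hmem
      have hidxZb : (zpowers ab).index = 2 := by
        have h1 : Nat.card (zpowers ab) * (zpowers ab).index = 2^n :=
          (Subgroup.card_mul_index _).trans hcardQ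
        rw [Nat.card_zpowers, habord] at h1
        have h2 : (2:ℕ)^n = 2^(n-1) * 2 := by rw [← pow_succ]; congr 1; omega
        rw [h2] at h1
        exact Nat.eq_of_mul_eq_mul_left (by positivity) h1
      have hidxH : H.index = 2 := by
        rw [hHdef, (zpowers ab).index_comap_of_surjective hsurj]
        exact hidxZb
      have hcr : ∀ g : G, Commute g r := fun g => hrcent g
      -- normal forms in H
      have hHform : ∀ h ∈ H, ∃ i : ℤ, h = a^i ∨ h = a^i * r := by
        intro h hh
        obtain ⟨i, hi⟩ := mem_zpowers_iff.mp (Subgroup.mem_comap.mp hh)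
        have hker : h * (a^i)⁻¹ ∈ R := by
          have h1 : π (h * (a^i)⁻¹) = 1 := by
            rw [map_mul, map_inv, map_zpow, ha, hi, mul_inv_cancel]
          exact (QuotientGroup.eq_one_iff _).mp h1
        rcases sq_one_mem hr2 hker with h1 | h1
        · exact ⟨i, Or.inl (mul_inv_eq_one.mp h1)⟩
        · refine ⟨i, Or.inr ?_⟩
          have h2 : h = r * a^i := by
            rw [← h1]; group
          rw [h2, (hcr (a^i)).eq]
      -- H is abelian
      have hHab : ∀ h1 ∈ H, ∀ h2 ∈ H, h1 * h2 = h2 * h1 := by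
        intro h1 hh1 h2 hh2
        obtain ⟨i, hc1⟩ := hHform h1 hh1
        obtain ⟨j, hc2⟩ := hHform h2 hh2
        have hbase : Commute (a^i) (a^j) := Commute.zpow_zpow (Commute.refl a) i j
        rcases hc1 with rfl | rfl <;> rcases hc2 with rfl | rfl
        · exact hbase.eq
        · exact (hbase.mul_right (hcr (a^i))).eq
        · exact (hbase.mul_left (hcr (a^j)).symm).eq
        · exact ((hbase.mul_left (hcr (a^j)).symm).mul_right (hcr (a^i * r))).eq
      -- t² ∈ H
      have hdecQ := decomp hcardQ habord (by omega) htb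
      have ht2H : t * t ∈ H := by
        rcases hdecQ (tb * tb) with ⟨i, hi⟩ | ⟨i, hi⟩
        · rw [hHdef, Subgroup.mem_comap, map_mul, htl, hi]
          exact zpow_mem (mem_zpowers ab) i
        · exfalso
          apply htb
          have h1 : tb = ab ^ i := mul_left_cancel hi
          rw [h1]
          exact zpow_mem (mem_zpowers ab) i
      -- conjugation preserves H
      have hconjQpow : ∀ i : ℤ, tb * ab^i * tb⁻¹ = ab^(i*sb) := by
        intro i
        have h1 : (MulAut.conj tb) (ab^i) = ((MulAut.conj tb) ab)^i := map_zpow _ _ _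
        simp only [MulAut.conj_apply] at h1
        rw [h1, hconjb, ← zpow_mul, mul_comm]
      have hconjH : ∀ h ∈ H, t * h * t⁻¹ ∈ H := by
        intro h hh
        obtain ⟨i, hi⟩ := mem_zpowers_iff.mp (Subgroup.mem_comap.mp hh)
        rw [hHdef, Subgroup.mem_comap, map_mul, map_mul, map_inv, htl, ← hi, hconjQpow]
        exact zpow_mem (mem_zpowers ab) _
      have hcaH : t * a * t⁻¹ ∈ H := hconjH a haH
      obtain ⟨j, hcaform⟩ := hHform _ hcaH
      -- π of the conjugate
      have hπca : π (t * a * t⁻¹) = ab ^ sb := by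
        rw [map_mul, map_mul, map_inv, htl, ha]
        exact hconjb
      have hjsb : (2:ℤ)^(n-1) ∣ j - sb := by
        have h1 : ab ^ j = ab ^ sb := by
          rw [← hπca]
          rcases hcaform with h | h
          · rw [h, map_zpow, ha]
          · rw [h, map_mul, map_zpow, ha, hπr, mul_one]
        have h2 : ab ^ (j - sb) = 1 := by rw [zpow_sub, h1, mul_inv_cancel]
        have h3 := orderOf_dvd_iff_zpow_eq_one.mpr h2
        rwa [habord, Nat.cast_pow, Nat.cast_ofNat] at h3
      obtain ⟨u, huodd, husb⟩ := odd_part hn hdvd1b hdvd2b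
      obtain ⟨w, hw⟩ : ∃ w : ℤ, j - 1 = 2 * w := by
        obtain ⟨c, hc⟩ := hjsb
        refine ⟨2^(n-2)*c + u, ?_⟩
        have h1 : j - 1 = (j - sb) + (sb - 1) := by ring
        rw [h1, hc, husb]
        have h2 : (2:ℤ)^(n-1) = 2 * 2^(n-2) := by
          rw [← pow_succ']; congr 1; omega
        rw [h2]
        ring
      set g0 : G := (t * a * t⁻¹) * a⁻¹ with hg0def
      have hg0form : g0 = a^(j-1) ∨ g0 = a^(j-1) * r := by
        rcases hcaform with h | h
        · left
          rw [hg0def, h, ← zpow_sub_one]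
        · right
          rw [hg0def, h]
          calc a^j * r * a⁻¹ = a^j * (r * a⁻¹) := by group
            _ = a^j * (a⁻¹ * r) := by rw [(hcr a⁻¹).eq]
            _ = (a^j * a⁻¹) * r := by group
            _ = a^(j-1) * r := by rw [← zpow_sub_one]
      have hz_exp : a ^ ((j-1) * ((2:ℤ)^(n-2))) = 1 := by
        have hint_exp : a ^ (((2:ℤ))^(n-1)) = 1 := by
          have hcast : ((2:ℤ))^(n-1) = ((2^(n-1):ℕ):ℤ) := by push_cast; ring
          rw [hcast, zpow_natCast]
          exact hasq
        have hee : (j-1) * ((2:ℤ)^(n-2)) = ((2:ℤ)^(n-1)) * w := by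
          rw [hw]
          have h2 : (2:ℤ)^(n-1) = 2 * 2^(n-2) := by
            rw [← pow_succ']; congr 1; omega
          rw [h2]
          ring
        rw [hee, zpow_mul, hint_exp, one_zpow]
      have hg0pow : g0 ^ ((2:ℕ)^(n-2)) = 1 := by
        have hzz : (a^(j-1)) ^ ((2:ℕ)^(n-2)) = 1 := by
          rw [← zpow_natCast (a^(j-1)), ← zpow_mul]
          have : (j-1) * (((2:ℕ)^(n-2) : ℕ) : ℤ) = (j-1) * ((2:ℤ)^(n-2)) := by
            push_cast; ring
          rw [this]
          exact hz_exp
        have hrr : r ^ ((2:ℕ)^(n-2)) = 1 := by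
          apply orderOf_dvd_iff_pow_eq_one.mp
          rw [hrord]
          exact dvd_pow_self 2 (by omega)
        rcases hg0form with h | h
        · rw [h]; exact hzz
        · rw [h, (hcr (a^(j-1))).mul_pow, hzz, hrr, one_mul]
      -- φ-values lie in zpowers g0
      have hφ : ∀ h ∈ H, (t*h*t⁻¹) * h⁻¹ ∈ zpowers g0 := by
        intro h hh
        obtain ⟨i, hform⟩ := hHform h hh
        have hconjzpow : t * a^i * t⁻¹ = (t*a*t⁻¹)^i := by
          have h1 : (MulAut.conj t) (a^i) = ((MulAut.conj t) a)^i := map_zpow _ _ _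
          simpa [MulAut.conj_apply] using h1
        have hcomm_ca_a : Commute (t*a*t⁻¹) a := hHab _ hcaH _ haH
        have hkey : (t*a*t⁻¹)^i * (a^i)⁻¹ = g0^i := by
          rw [hg0def, hcomm_ca_a.inv_right.mul_zpow]
          rw [inv_zpow]
        rcases hform with rfl | rfl
        · rw [hconjzpow, hkey]
          exact zpow_mem (mem_zpowers g0) i
        · have hrt : t * r * t⁻¹ = r := by
            calc t * r * t⁻¹ = r * t * t⁻¹ := by rw [(hcr t).eq]
              _ = r := by group
          have hstep : t * (a^i * r) * t⁻¹ = (t*a^i*t⁻¹) * r := by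
            calc t * (a^i*r) * t⁻¹ = (t*a^i*t⁻¹) * (t*r*t⁻¹) := by group
              _ = (t*a^i*t⁻¹) * r := by rw [hrt]
          rw [hstep, hconjzpow]
          have hfin : ((t*a*t⁻¹)^i * r) * (a^i * r)⁻¹ = g0^i := by
            rw [← hkey]; group
          rw [hfin]
          exact zpow_mem (mem_zpowers g0) i
      -- all commutators lie in zpowers g0
      have hall : ∀ g1 g2 : G, ⁅g1, g2⁆ ∈ zpowers g0 := by
        intro g1 g2
        rcases coset_decomp H hidxH htH g1 with hh1 | ⟨h1, hh1, rfl⟩ <;>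
          rcases coset_decomp H hidxH htH g2 with hh2 | ⟨h2, hh2, rfl⟩
        · have : ⁅g1, g2⁆ = 1 :=
            commutatorElement_eq_one_iff_commute.mpr (hHab _ hh1 _ hh2)
          rw [this]; exact one_mem _
        · -- g1 ∈ H, g2 = t * h2
          have hmid : h2 * g1⁻¹ * h2⁻¹ = g1⁻¹ := by
            rw [hHab _ hh2 _ (inv_mem hh1)]; group
          have hval : ⁅g1, t*h2⁆ = ((t*g1*t⁻¹) * g1⁻¹)⁻¹ := by
            calc ⁅g1, t*h2⁆ = g1 * (t * (h2 * g1⁻¹ * h2⁻¹) * t⁻¹) := by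
                  rw [commutatorElement_def]; group
              _ = g1 * (t * g1⁻¹ * t⁻¹) := by rw [hmid]
              _ = ((t*g1*t⁻¹) * g1⁻¹)⁻¹ := by group
          rw [hval]
          exact inv_mem (hφ g1 hh1)
        · -- g1 = t*h1, g2 ∈ H
          have hmid : h1 * g2 * h1⁻¹ = g2 := by
            rw [hHab _ hh1 _ hh2]; group
          have hval : ⁅t*h1, g2⁆ = (t*g2*t⁻¹) * g2⁻¹ := by
            calc ⁅t*h1, g2⁆ = t * (h1*g2*h1⁻¹) * t⁻¹ * g2⁻¹ := by
                  rw [commutatorElement_def]; group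
              _ = (t*g2*t⁻¹) * g2⁻¹ := by rw [hmid]
          rw [hval]
          exact hφ g2 hh2
        · -- both outside
          have e1 : (t*h1)*(t*h2) = (t*h1*t⁻¹) * ((t*t) * h2) := by group
          have e2 : (t*h2)*(t*h1) = (t*h2*t⁻¹) * ((t*t) * h1) := by group
          have hmid : (t*t) * (h2 * h1⁻¹) * (t*t)⁻¹ = h2 * h1⁻¹ := by
            rw [hHab _ ht2H _ (mul_mem hh2 (inv_mem hh1))]; group
          have hswap : h1⁻¹ * h2 = h2 * h1⁻¹ := hHab _ (inv_mem hh1) _ hh2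
          have hval : ⁅t*h1, t*h2⁆ = ((t*h1*t⁻¹) * h1⁻¹) * ((t*h2*t⁻¹) * h2⁻¹)⁻¹ := by
            calc ⁅t*h1, t*h2⁆ = ((t*h1)*(t*h2)) * ((t*h2)*(t*h1))⁻¹ := by
                  rw [commutatorElement_def]; group
              _ = ((t*h1*t⁻¹) * ((t*t)*h2)) * ((t*h2*t⁻¹) * ((t*t)*h1))⁻¹ := by
                  rw [e1, e2]
              _ = (t*h1*t⁻¹) * ((t*t) * (h2 * h1⁻¹) * (t*t)⁻¹) * (t*h2*t⁻¹)⁻¹ := by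
                  group
              _ = (t*h1*t⁻¹) * (h2 * h1⁻¹) * (t*h2*t⁻¹)⁻¹ := by rw [hmid]
              _ = (t*h1*t⁻¹) * (h1⁻¹ * h2) * (t*h2*t⁻¹)⁻¹ := by rw [hswap]
              _ = ((t*h1*t⁻¹) * h1⁻¹) * ((t*h2*t⁻¹) * h2⁻¹)⁻¹ := by group
          rw [hval]
          exact mul_mem (hφ h1 hh1) (inv_mem (hφ h2 hh2))
      -- contradiction via cardinalities
      have hle : commutator G ≤ zpowers g0 := by
        rw [_root_.commutator_def, Subgroup.commutator_le]
        intro g1 _ g2 _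
        exact hall g1 g2
      have hcard_le : Nat.card (commutator G) ≤ Nat.card (zpowers g0) :=
        Subgroup.card_le_of_le hle
      have hcard_g0 : Nat.card (zpowers g0) ≤ 2^(n-2) := by
        rw [Nat.card_zpowers]
        exact Nat.le_of_dvd (by positivity) (orderOf_dvd_of_pow_eq_one hg0pow)
      rw [hcardcomm] at hcard_le
      have hlt : (2:ℕ)^(n-2) < 2^(n-1) := Nat.pow_lt_pow_right (by norm_num) (by omega)
      omega

section Final

private lemma gamma_formula {G : Type} [Group G] {a : G} {s : ℤ}
    (hbase : commutator G = zpowers (a ^ (s-1)))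
    (hstep : ∀ mm : ℤ, ⁅(zpowers (a^mm) : Subgroup G), (⊤ : Subgroup G)⁆
      = zpowers (a ^ (mm * (s-1)))) :
    ∀ k : ℕ, (⊤ : Subgroup G).lowerCentralSeries (k+1) = zpowers (a ^ ((s-1)^(k+1))) := by
  intro k
  induction k with
  | zero =>
    rw [top_lowerCentralSeries_one, hbase, pow_one]
  | succ k ihk =>
    have hrfl : (⊤ : Subgroup G).lowerCentralSeries (k+1+1) = ⁅(⊤ : Subgroup G).lowerCentralSeries (k+1), ⊤⁆ := rfl
    rw [hrfl, ihk, hstep ((s-1)^(k+1)), ← pow_succ]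

private lemma degree_bound {G : Type} [Group G] [Finite G] {n : ℕ} (hn : 1 ≤ n)
    (hcard : Nat.card G = 2 ^ n) {a t : G} {s : ℤ}
    (ha : orderOf a = 2 ^ (n-1)) (ht : t ∉ zpowers a)
    (hconjinv : t⁻¹ * a * t = a ^ s) (ht2 : t * t ∈ zpowers a)
    (V : FDRep ℂ G) (hV : CategoryTheory.Simple V) :
    Module.finrank ℂ V = 1 ∨ Module.finrank ℂ V = 2 := by
  classical
  have hdec := decomp hcard ha hn ht
  -- V is nonzero
  have hfr1 : 1 ≤ Module.finrank ℂ V := by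
    by_contra hcon
    have h0 : Module.finrank ℂ V = 0 := by omega
    have hsub : Subsingleton V := Module.finrank_zero_iff.mp h0
    apply CategoryTheory.id_nonzero V
    apply Action.Hom.ext
    ext x
    exact hsub.elim _ _
  have hnt : Nontrivial V :=
    Module.nontrivial_of_finrank_pos (lt_of_lt_of_le Nat.zero_lt_one hfr1)
  -- an eigenvector for a
  obtain ⟨μ, hμev⟩ := Module.End.exists_eigenvalue (V.ρ a : Module.End ℂ V)
  obtain ⟨v, hv⟩ := hμev.exists_hasEigenvector
  have hva : V.ρ a v = μ • v := hv.apply_eq_smul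
  have hvne : v ≠ 0 := hv.right
  have hcancel : ∀ (x : G) (u : V), V.ρ x⁻¹ (V.ρ x u) = u := by
    intro x u
    calc V.ρ x⁻¹ (V.ρ x u) = (V.ρ x⁻¹ * V.ρ x) u := rfl
      _ = V.ρ (x⁻¹ * x) u := by rw [← map_mul]
      _ = u := by rw [inv_mul_cancel, map_one]; rfl
  have hμ0 : μ ≠ 0 := by
    intro h
    apply hvne
    have h1 : V.ρ a v = 0 := by rw [hva, h, zero_smul]
    have h2 := hcancel a v
    rw [h1, map_zero] at h2
    exact h2.symm
  -- all elements of ⟨a⟩ act on v by nonzero scalars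
  have hnat : ∀ k : ℕ, ∃ c : ℂ, c ≠ 0 ∧ V.ρ (a ^ k) v = c • v := by
    intro k
    induction k with
    | zero => exact ⟨1, one_ne_zero, by rw [pow_zero, map_one, one_smul]; rfl⟩
    | succ k ih =>
      obtain ⟨c, hc0, hc⟩ := ih
      refine ⟨c * μ, mul_ne_zero hc0 hμ0, ?_⟩
      calc V.ρ (a ^ (k+1)) v = V.ρ (a^k * a) v := by rw [pow_succ]
        _ = V.ρ (a^k) (V.ρ a v) := by rw [map_mul]; rfl
        _ = V.ρ (a^k) (μ • v) := by rw [hva]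
        _ = μ • (V.ρ (a^k) v) := by rw [map_smul]
        _ = (c * μ) • v := by rw [hc, smul_smul, mul_comm]
  have key : ∀ g ∈ zpowers a, ∃ c : ℂ, c ≠ 0 ∧ V.ρ g v = c • v := by
    intro g hg
    obtain ⟨i, hi⟩ := mem_zpowers_iff.mp hg
    rcases i with k | k
    · obtain ⟨c, hc0, hc⟩ := hnat k
      refine ⟨c, hc0, ?_⟩
      rw [← hi, Int.ofNat_eq_coe, zpow_natCast]
      exact hc
    · obtain ⟨c, hc0, hc⟩ := hnat (k+1)
      refine ⟨c⁻¹, inv_ne_zero hc0, ?_⟩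
      have h1 : g = (a ^ (k+1 : ℕ))⁻¹ := by rw [← hi, zpow_negSucc]
      have h2 : c • (V.ρ ((a ^ (k+1:ℕ))⁻¹) v) = v := by
        calc c • (V.ρ ((a ^ (k+1:ℕ))⁻¹) v)
            = V.ρ ((a ^ (k+1:ℕ))⁻¹) (c • v) := by rw [map_smul]
          _ = V.ρ ((a ^ (k+1:ℕ))⁻¹) (V.ρ (a^(k+1:ℕ)) v) := by rw [hc]
          _ = v := hcancel _ v
      rw [h1]
      conv_rhs => rw [← h2]
      rw [inv_smul_smul₀ hc0]
  -- the invariant subspace spanned by v and ρ t v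
  set w : V := V.ρ t v with hwdef
  set W : Submodule ℂ V := Submodule.span ℂ ({v, w} : Set V) with hWdef
  have hvW : v ∈ W := Submodule.subset_span (Set.mem_insert _ _)
  have hwW : w ∈ W := Submodule.subset_span (Set.mem_insert_of_mem _ rfl)
  have hconjinv_pow : ∀ i : ℤ, t⁻¹ * a^i * t = a^(i*s) := by
    intro i
    have h1 : (MulAut.conj t⁻¹) (a^i) = ((MulAut.conj t⁻¹) a)^i := map_zpow _ _ _
    simp only [MulAut.conj_apply, inv_inv] at h1
    rw [h1, hconjinv, ← zpow_mul, mul_comm]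
  have hswap : ∀ i : ℤ, a^i * t = t * a^(i*s) := by
    intro i
    calc a^i * t = t * (t⁻¹ * a^i * t) := by group
      _ = t * a^(i*s) := by rw [hconjinv_pow i]
  have hgen : ∀ g : G, V.ρ g v ∈ W ∧ V.ρ g w ∈ W := by
    intro g
    rcases hdec g with ⟨i, rfl⟩ | ⟨i, rfl⟩
    · constructor
      · obtain ⟨c, _, hc⟩ := key (a^i) (zpow_mem (mem_zpowers a) i)
        rw [hc]
        exact Submodule.smul_mem _ _ hvW
      · obtain ⟨c, _, hc⟩ := key (a^(i*s)) (zpow_mem (mem_zpowers a) _)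
        have h1 : V.ρ (a^i) w = V.ρ t (V.ρ (a^(i*s)) v) := by
          calc V.ρ (a^i) (V.ρ t v) = V.ρ (a^i * t) v := by rw [map_mul]; rfl
            _ = V.ρ (t * a^(i*s)) v := by rw [hswap i]
            _ = V.ρ t (V.ρ (a^(i*s)) v) := by rw [map_mul]; rfl
        rw [h1, hc, map_smul]
        exact Submodule.smul_mem _ _ hwW
    · constructor
      · obtain ⟨c, _, hc⟩ := key (a^i) (zpow_mem (mem_zpowers a) i)
        have h1 : V.ρ (t * a^i) v = V.ρ t (V.ρ (a^i) v) := by rw [map_mul]; rfl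
        rw [h1, hc, map_smul]
        exact Submodule.smul_mem _ _ hwW
      · have hmem : (t*a^i)*t ∈ zpowers a := by
          have h1 : (t*a^i)*t = (t*t)*a^(i*s) := by
            calc (t*a^i)*t = t * (a^i * t) := by group
              _ = t * (t * a^(i*s)) := by rw [hswap i]
              _ = (t*t)*a^(i*s) := by group
          rw [h1]
          exact mul_mem ht2 (zpow_mem (mem_zpowers a) _)
        obtain ⟨c, _, hc⟩ := key _ hmem
        have h1 : V.ρ (t*a^i) w = V.ρ ((t*a^i)*t) v := by
          rw [map_mul V.ρ (t*a^i) t]; rfl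
        rw [h1, hc]
        exact Submodule.smul_mem _ _ hvW
  have hstab : ∀ (g : G), ∀ x ∈ W, V.ρ g x ∈ W := by
    intro g x hx
    have himg : Submodule.map (V.ρ g) W ≤ W := by
      rw [hWdef, Submodule.map_span, Submodule.span_le]
      rintro y ⟨z, hz, rfl⟩
      rcases Set.mem_insert_iff.mp hz with rfl | hz'
      · exact (hgen g).1
      · rw [Set.mem_singleton_iff.mp hz']
        exact (hgen g).2
    exact himg (Submodule.mem_map_of_mem hx)
  -- the subrepresentation
  let θ : Representation ℂ G W :=
    { toFun := fun g => (V.ρ g).restrict (fun x hx => hstab g x hx)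
      map_one' := by
        apply LinearMap.ext
        intro x
        apply Subtype.ext
        simp [LinearMap.restrict_apply]
      map_mul' := by
        intro g h
        apply LinearMap.ext
        intro x
        apply Subtype.ext
        simp [LinearMap.restrict_apply, map_mul] }
  let U : FDRep ℂ G := FDRep.of θ
  let ι : U ⟶ V :=
    { hom := FGModuleCat.ofHom W.subtype
      comm := fun g => by
        ext x
        rfl }
  have hmono : CategoryTheory.Mono ι := by
    constructor
    intro Z f g hfg
    apply Action.Hom.ext
    ext x
    have h1 := congrArg (fun q : Z ⟶ V => q.hom.hom.hom x) hfg
    simp only [Action.comp_hom] at h1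
    exact h1
  have hι0 : ι ≠ 0 := by
    intro h
    apply hvne
    have h1 : ι.hom.hom.hom ⟨v, hvW⟩ = v := rfl
    rw [h] at h1
    rw [← h1]
    rfl
  have hiso : CategoryTheory.IsIso ι := CategoryTheory.isIso_of_mono_of_nonzero hι0
  have e := FDRep.isoToLinearEquiv (CategoryTheory.asIso ι)
  have hdim : Module.finrank ℂ U = Module.finrank ℂ V := e.finrank_eq
  have hW2 : Module.finrank ℂ W ≤ 2 := by
    have h1 := finrank_span_le_card (R := ℂ) ({v, w} : Set V)
    have h2 : ({v, w} : Set V).toFinset.card ≤ 2 := by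
      rw [Set.toFinset_insert]
      calc (insert v ({w} : Set V).toFinset).card
          ≤ ({w} : Set V).toFinset.card + 1 := Finset.card_insert_le _ _
        _ ≤ 2 := by rw [Set.toFinset_singleton]; simp
    exact le_trans (by rw [hWdef]; exact h1) h2
  have hUW : Module.finrank ℂ U = Module.finrank ℂ W := rfl
  omega

end Final

/-- Let `G` be a finite `2`-group with `|G : G'| = 4` and `|G| ≥ 8`. Then `G` is of
maximal class, and every irreducible complex character of `G` has degree `1` or `2`. -/
theorem stmt18 (G : Type) [Group G] [Finite G] (hG : IsPGroup 2 G)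
    (hidx : (commutator G).index = 4) (hcard : 8 ≤ Nat.card G) :
    (∃ n : ℕ, Nat.card G = 2 ^ n ∧
      Group.nilpotencyClass G = n - 1) ∧
    ∀ (V : FDRep ℂ G), CategoryTheory.Simple V →
      Module.finrank ℂ V = 1 ∨ Module.finrank ℂ V = 2 := by
  haveI : Fact (Nat.Prime 2) := ⟨by norm_num⟩
  obtain ⟨n, hcardG⟩ := IsPGroup.iff_card.mp hG
  have hn3 : 3 ≤ n := by
    rw [hcardG] at hcard
    by_contra h
    push_neg at h
    interval_cases n <;> norm_num at hcard
  obtain ⟨a, t, s, ha, ht, hconj, hdvd1, hdvd2⟩ := keyStruct n hn3 G hG hidx hcardG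
  obtain ⟨hcomm, hs2, ht2, hconjinv, hgamma⟩ := comm_eq (by omega) hcardG ha ht hconj
  obtain ⟨u, huodd, hu⟩ := odd_part hn3 hdvd1 hdvd2
  have hγ := gamma_formula hcomm hgamma
  haveI hGnil : Group.IsNilpotent G := hG.isNilpotent
  have horder : ((orderOf a : ℕ) : ℤ) = (2:ℤ)^(n-1) := by rw [ha]; push_cast; ring
  constructor
  · refine ⟨n, hcardG, ?_⟩
    have hbot : (⊤ : Subgroup G).lowerCentralSeries (n-1) = ⊥ := by
      have h1 : n - 1 = (n-2) + 1 := by omega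
      rw [h1, hγ (n-2), Subgroup.zpowers_eq_bot]
      apply orderOf_dvd_iff_zpow_eq_one.mp
      rw [horder]
      have h2 : (s-1)^((n-2)+1) = 2^(n-1) * u^(n-1) := by
        rw [hu, show (n-2)+1 = n-1 by omega, mul_pow]
      rw [h2]
      exact Dvd.intro _ rfl
    have hnbot : (⊤ : Subgroup G).lowerCentralSeries (n-2) ≠ ⊥ := by
      have h1 : n - 2 = (n-3) + 1 := by omega
      rw [h1, hγ (n-3), Ne, Subgroup.zpowers_eq_bot]
      intro hone
      have h3 := orderOf_dvd_iff_zpow_eq_one.mpr hone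
      rw [horder] at h3
      have h2 : (s-1)^((n-3)+1) = 2^(n-2) * u^(n-2) := by
        rw [hu, show (n-3)+1 = n-2 by omega, mul_pow]
      rw [h2] at h3
      have h4 : (2:ℤ)^(n-1) = 2^(n-2) * 2 := by rw [← pow_succ]; congr 1; omega
      rw [h4] at h3
      have h5 : (2:ℤ) ∣ u^(n-2) :=
        (mul_dvd_mul_iff_left (a := (2:ℤ)^(n-2)) (by positivity)).mp h3
      have h6 : Odd (u^(n-2)) := huodd.pow
      rw [← Int.not_even_iff_odd] at h6
      obtain ⟨c, hc⟩ := h5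
      exact h6 ⟨c, by omega⟩
    have hle : Group.nilpotencyClass G ≤ n-1 :=
      Subgroup.lowerCentralSeries_eq_bot_iff_nilpotencyClass_le.mp hbot
    have hgt : ¬ (Group.nilpotencyClass G ≤ n-2) := fun h =>
      hnbot (Subgroup.lowerCentralSeries_eq_bot_iff_nilpotencyClass_le.mpr h)
    have hfin : Group.nilpotencyClass G = n - 1 := by omega
    exact hfin
  · intro V hV
    exact degree_bound (by omega) hcardG ha ht hconjinv ht2 V hV
end

section
/- Let G be a finite p-group of maximal class with |G| ≥ p^4 that has an irreducible complex character of degree greater than p. Then the subgroup G₁ = C_G(γ₂(G)/γ₄(G)) is nonabelian. -/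
open Module
open scoped commutatorElement
set_option linter.unusedSectionVars false
set_option maxHeartbeats 1000000 in

/-- Restrict a representation to an invariant submodule. -/
def restrictSub {k A V : Type*} [CommSemiring k] [Monoid A] [AddCommMonoid V] [Module k V]
    (ρ : Representation k A V) (W : Submodule k V) (h : ∀ a : A, ∀ w ∈ W, ρ a w ∈ W) :
    Representation k A W where
  toFun a := (ρ a).restrict (fun w hw => h a w hw)
  map_one' := by ext w; simp [LinearMap.restrict_apply]
  map_mul' a b := by ext w; simp [LinearMap.restrict_apply]

lemma exists_invariant_line (A : Type*) [Group A] :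
    ∀ (d : ℕ) (V : Type) (_ : AddCommGroup V) (_ : Module ℂ V) (_ : FiniteDimensional ℂ V)
    (_ : Nontrivial V), finrank ℂ V ≤ d → ∀ (ρ : Representation ℂ A V),
    (∀ a b : A, (ρ a).comp (ρ b) = (ρ b).comp (ρ a)) →
    ∃ W : Submodule ℂ V, (∀ a : A, ∀ w ∈ W, ρ a w ∈ W) ∧ finrank ℂ W = 1 := by
  intro d
  induction d with
  | zero =>
    intro V _ _ _ _ hle ρ _
    exact absurd hle (by simpa using Module.finrank_pos.ne')
  | succ d ih =>
    intro V _ _ _ _ hle ρ hcomm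
    by_cases hscal : ∀ a : A, ∃ c : ℂ, (ρ a : Module.End ℂ V) = c • (1 : Module.End ℂ V)
    · obtain ⟨v, hv⟩ := exists_ne (0 : V)
      refine ⟨Submodule.span ℂ {v}, ?_, finrank_span_singleton hv⟩
      intro a w hw
      obtain ⟨c, hc⟩ := hscal a
      have : ρ a w = c • w := by rw [hc]; rfl
      rw [this]
      exact Submodule.smul_mem _ _ hw
    · push_neg at hscal
      obtain ⟨a, ha⟩ := hscal
      obtain ⟨c₀, hc₀⟩ := Module.End.exists_eigenvalue (ρ a : Module.End ℂ V)
      set E := Module.End.eigenspace (ρ a : Module.End ℂ V) c₀ with hE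
      have hEbot : E ≠ ⊥ := hc₀
      have hEtop : E ≠ ⊤ := by
        intro htop
        apply ha c₀
        ext v
        have hv : v ∈ E := htop ▸ Submodule.mem_top
        simpa using (Module.End.mem_eigenspace_iff.mp hv)
      have hEinv : ∀ b : A, ∀ v ∈ E, ρ b v ∈ E := by
        intro b v hv
        rw [hE, Module.End.mem_eigenspace_iff] at *
        have := congrArg (fun f => f v) (hcomm a b)
        simp only [LinearMap.comp_apply] at this
        rw [this, hv, map_smul]
      have : Nontrivial E := Submodule.nontrivial_iff_ne_bot.mpr hEbot
      have hlt : finrank ℂ E < finrank ℂ V := Submodule.finrank_lt hEtop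
      obtain ⟨W', hW'inv, hW'1⟩ := ih E inferInstance inferInstance inferInstance this (by omega) (restrictSub ρ E hEinv)
        (by
          intro a' b'
          ext w
          have := congrArg (fun f => f (w : V)) (hcomm a' b')
          simp only [LinearMap.comp_apply] at this
          simpa [restrictSub, LinearMap.restrict_apply] using this)
      refine ⟨W'.map E.subtype, ?_, ?_⟩
      · rintro b w hw
        obtain ⟨w', hw', rfl⟩ := Submodule.mem_map.mp hw
        refine Submodule.mem_map.mpr ⟨restrictSub ρ E hEinv b w', hW'inv b w' hw', rfl⟩
      · rw [Submodule.finrank_map_subtype_eq]; exact hW'1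

open CategoryTheory in
lemma invariant_bot_or_top {G : Type} [Group G] (V : FDRep ℂ G) [Simple V]
    (U : Submodule ℂ V) (hU : ∀ g : G, ∀ v ∈ U, V.ρ g v ∈ U) : U = ⊥ ∨ U = ⊤ := by
  by_cases hbot : U = ⊥
  · exact Or.inl hbot
  right
  let W : FDRep ℂ G := FDRep.of (restrictSub (V.ρ) U hU)
  let ι : W ⟶ V := ⟨FGModuleCat.ofHom (V := U) (W := V) U.subtype, by
    intro g
    ext w
    rfl⟩
  have hinj : Function.Injective ι.hom := fun a b h => Subtype.val_injective h
  have : Mono ι := by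
    apply (forget (FDRep ℂ G)).mono_of_mono_map
    rw [CategoryTheory.mono_iff_injective]
    exact hinj
  have hne : ι ≠ 0 := by
    intro h0
    have hnt : Nontrivial U := Submodule.nontrivial_iff_ne_bot.mpr hbot
    obtain ⟨u, hu⟩ := exists_ne (0 : U)
    have h1 : (U.subtype : U →ₗ[ℂ] V) = 0 := congrArg (fun f => f.hom.hom.hom) h0
    have h2 := LinearMap.congr_fun h1 u
    simp only [Submodule.subtype_apply, LinearMap.zero_apply] at h2
    exact hu (Subtype.ext h2)
  have hiso : IsIso ι := isIso_of_mono_of_nonzero hne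
  have hiso2 : IsIso ((forget (FDRep ℂ G)).map ι) := inferInstance
  rw [CategoryTheory.isIso_iff_bijective] at hiso2
  rw [eq_top_iff]
  intro v _
  obtain ⟨u, hu⟩ := hiso2.2 v
  exact hu ▸ u.2


-- finrank of a finite sup of submodules
lemma finrank_biSup_le {V : Type*} [AddCommGroup V] [Module ℂ V] [FiniteDimensional ℂ V]
    {ι : Type*} (s : Finset ι) (f : ι → Submodule ℂ V) :
    finrank ℂ (⨆ i ∈ s, f i : Submodule ℂ V) ≤ ∑ i ∈ s, finrank ℂ (f i) := by
  classical
  induction s using Finset.induction with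
  | empty => simp
  | insert a s hni ih =>
    rw [Finset.sum_insert hni]
    have : (⨆ i ∈ insert a s, f i : Submodule ℂ V) = f a ⊔ ⨆ i ∈ s, f i := by
      exact Finset.iSup_insert a s f
    rw [this]
    calc finrank ℂ (f a ⊔ ⨆ i ∈ s, f i : Submodule ℂ V)
        ≤ finrank ℂ (f a) + finrank ℂ (⨆ i ∈ s, f i : Submodule ℂ V) := by
          have := Submodule.finrank_sup_add_finrank_inf_eq (f a) (⨆ i ∈ s, f i)
          omega
      _ ≤ _ := by exact Nat.add_le_add_left ih _

open CategoryTheory in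
lemma finrank_le_index {G : Type} [Group G] [Finite G] (V : FDRep ℂ G) [Simple V]
    (A : Subgroup G) (W : Submodule ℂ V) (hW : ∀ a : A, ∀ w ∈ W, V.ρ (a : G) w ∈ W)
    (hW1 : finrank ℂ W = 1) : finrank ℂ V ≤ A.index := by
  classical
  -- each translate
  have hmapA : ∀ a : A, W.map (V.ρ (a : G)) = W := by
    intro a
    apply le_antisymm
    · rintro _ ⟨w, hw, rfl⟩
      exact hW a w hw
    · intro w hw
      refine ⟨V.ρ ((a : G)⁻¹) w, ?_, ?_⟩
      · have := hW a⁻¹ w hw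
        simpa using this
      · have : V.ρ (a : G) (V.ρ ((a:G)⁻¹) w) = V.ρ ((a:G) * (a:G)⁻¹) w := by
          rw [map_mul]; rfl
        simpa using this
  have hcomp : ∀ (g h : G), (W.map (V.ρ h)).map (V.ρ g) = W.map (V.ρ (g * h)) := by
    intro g h
    rw [← Submodule.map_comp]
    congr 1
    rw [map_mul]
    rfl
  set U : Submodule ℂ V := ⨆ g : G, W.map (V.ρ g) with hUdef
  have hUinv : ∀ g : G, ∀ v ∈ U, V.ρ g v ∈ U := by
    intro g v hv
    have hle : U.map (V.ρ g) ≤ U := by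
      rw [hUdef, Submodule.map_iSup]
      apply iSup_le
      intro h
      rw [hcomp]
      exact le_iSup (fun g : G => W.map (V.ρ g)) (g * h)
    exact hle ⟨v, hv, rfl⟩
  have hWle : W ≤ U := by
    have h1 : W.map (V.ρ (1 : G)) = W := by
      rw [map_one]; exact Submodule.map_id W
    calc W = W.map (V.ρ (1:G)) := h1.symm
      _ ≤ U := le_iSup (fun g : G => W.map (V.ρ g)) 1
  have hUtop : U = ⊤ := by
    rcases invariant_bot_or_top V U hUinv with h | h
    · exfalso
      have : W = ⊥ := le_bot_iff.mp (h ▸ hWle)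
      rw [this] at hW1
      simp at hW1
    · exact h
  -- reindex over cosets
  have hcoset : U = ⨆ q : G ⧸ A, W.map (V.ρ (Quotient.out q)) := by
    apply le_antisymm
    · apply iSup_le
      intro g
      obtain ⟨a, ha⟩ := QuotientGroup.mk_out_eq_mul A g
      have : W.map (V.ρ (Quotient.out (QuotientGroup.mk (s := A) g))) = W.map (V.ρ g) := by
        rw [ha, ← hcomp, hmapA]
      rw [← this]
      exact le_iSup (fun q : G ⧸ A => W.map (V.ρ (Quotient.out q))) (QuotientGroup.mk (s := A) g)
    · apply iSup_le
      intro q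
      exact le_iSup (fun g : G => W.map (V.ρ g)) _
  have hfin : Fintype (G ⧸ A) := Fintype.ofFinite _
  have hbound : finrank ℂ U ≤ A.index := by
    rw [hcoset]
    have h1 : (⨆ q : G ⧸ A, W.map (V.ρ (Quotient.out q))) =
        ⨆ q ∈ (Finset.univ : Finset (G ⧸ A)), W.map (V.ρ (Quotient.out q)) := by
      simp
    rw [h1]
    calc finrank ℂ (⨆ q ∈ (Finset.univ : Finset (G ⧸ A)), W.map (V.ρ (Quotient.out q)) : Submodule ℂ V)
        ≤ ∑ q ∈ Finset.univ, finrank ℂ (W.map (V.ρ (Quotient.out q))) := finrank_biSup_le _ _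
      _ ≤ ∑ _q ∈ (Finset.univ : Finset (G ⧸ A)), 1 := by
          apply Finset.sum_le_sum
          intro q _
          calc finrank ℂ (W.map (V.ρ (Quotient.out q))) ≤ finrank ℂ W := Submodule.finrank_map_le _ _
            _ = 1 := hW1
      _ = Fintype.card (G ⧸ A) := by simp
      _ = A.index := by rw [Subgroup.index, Nat.card_eq_fintype_card]
  calc finrank ℂ V = finrank ℂ (⊤ : Submodule ℂ V) := (finrank_top ℂ _).symm
    _ = finrank ℂ U := by rw [hUtop]
    _ ≤ A.index := hbound



section PartA2
variable {G : Type} [Group G] [Finite G]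

lemma lcs_stabilize (k : ℕ) (h : (⊤ : Subgroup G).lowerCentralSeries (k+1) = (⊤ : Subgroup G).lowerCentralSeries k) :
    ∀ m, (⊤ : Subgroup G).lowerCentralSeries (k + m) = (⊤ : Subgroup G).lowerCentralSeries k := by
  intro m
  induction m with
  | zero => rfl
  | succ m ih =>
    calc (⊤ : Subgroup G).lowerCentralSeries (k + m + 1) = ⁅(⊤ : Subgroup G).lowerCentralSeries (k + m), ⊤⁆ := rfl
      _ = ⁅(⊤ : Subgroup G).lowerCentralSeries k, ⊤⁆ := by rw [ih]
      _ = (⊤ : Subgroup G).lowerCentralSeries (k+1) := rfl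
      _ = (⊤ : Subgroup G).lowerCentralSeries k := h

lemma lcs_eq_bot_of_succ_eq [hG : Group.IsNilpotent G] (k : ℕ)
    (h : (⊤ : Subgroup G).lowerCentralSeries (k+1) = (⊤ : Subgroup G).lowerCentralSeries k) :
    (⊤ : Subgroup G).lowerCentralSeries k = ⊥ := by
  have h2 := lcs_stabilize k h (Group.nilpotencyClass G)
  have h3 : (⊤ : Subgroup G).lowerCentralSeries (k + Group.nilpotencyClass G) ≤
      (⊤ : Subgroup G).lowerCentralSeries (Group.nilpotencyClass G) :=
    lowerCentralSeries_antitone _ (Nat.le_add_left _ _)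
  rw [h2, lowerCentralSeries_nilpotencyClass] at h3
  exact le_bot_iff.mp h3

lemma lcs_strict [hG : Group.IsNilpotent G] {k : ℕ}
    (h : k < Group.nilpotencyClass G) :
    (⊤ : Subgroup G).lowerCentralSeries (k+1) < (⊤ : Subgroup G).lowerCentralSeries k := by
  rcases lt_or_eq_of_le (lowerCentralSeries_antitone (G := G) ⊤ (Nat.le_succ k)) with h' | h'
  · exact h'
  · exfalso
    have := lcs_eq_bot_of_succ_eq k h'
    rw [lowerCentralSeries_eq_bot_iff_nilpotencyClass_le] at this
    omega

lemma card_eq_relindex_mul_card {H K : Subgroup G} (h : H ≤ K) :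
    Nat.card K = H.relIndex K * Nat.card H := by
  have h1 := Subgroup.index_mul_card (G := ↥K) (H := H.subgroupOf K)
  rw [Nat.card_congr (Subgroup.subgroupOfEquivOfLe h).toEquiv] at h1
  exact h1.symm

lemma p_le_of_dvd {p t N : ℕ} (hp : p.Prime) (ht : t ∣ p ^ N) (h1 : t ≠ 1) : p ≤ t := by
  obtain ⟨m, _, rfl⟩ := (Nat.dvd_prime_pow hp).mp ht
  rcases Nat.eq_zero_or_pos m with rfl | hm
  · simp at h1
  · calc p = p ^ 1 := (pow_one p).symm
      _ ≤ p ^ m := Nat.pow_le_pow_right hp.pos hm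

-- relindex of consecutive lcs terms divides p ^ n
lemma lcs_relindex_dvd {p n : ℕ} (hcard : Nat.card G = p ^ n) {j k : ℕ}
    (h : (⊤ : Subgroup G).lowerCentralSeries k ≤ (⊤ : Subgroup G).lowerCentralSeries j) :
    ((⊤ : Subgroup G).lowerCentralSeries k).relIndex ((⊤ : Subgroup G).lowerCentralSeries j) ∣ p ^ n := by
  calc ((⊤ : Subgroup G).lowerCentralSeries k).relIndex ((⊤ : Subgroup G).lowerCentralSeries j)
      ∣ ((⊤ : Subgroup G).lowerCentralSeries k).index := Subgroup.relIndex_dvd_index_of_le h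
    _ ∣ Nat.card G := Subgroup.index_dvd_card _
    _ ∣ p ^ n := hcard ▸ dvd_rfl


end PartA2

section Count
variable {G : Type} [Group G] [Finite G]

set_option linter.unusedSectionVars false

lemma card_lcs_ge {p n : ℕ} (hp : p.Prime) (hcard : Nat.card G = p ^ n)
    [Group.IsNilpotent G] :
    ∀ i, i ≤ Group.nilpotencyClass G →
      p ^ i ≤ Nat.card ((⊤ : Subgroup G).lowerCentralSeries (Group.nilpotencyClass G - i)) := by
  intro i
  induction i with
  | zero => intro _; simpa using Nat.card_pos
  | succ i ih =>
    intro hi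
    set c := Group.nilpotencyClass G with hc
    have hj : c - (i+1) + 1 = c - i := by omega
    have hstrict : (⊤ : Subgroup G).lowerCentralSeries (c - i) < (⊤ : Subgroup G).lowerCentralSeries (c - (i+1)) := by
      have := lcs_strict (G := G) (k := c - (i+1)) (by omega)
      rwa [hj] at this
    have hcardrel := card_eq_relindex_mul_card hstrict.le
    have hne1 : ((⊤ : Subgroup G).lowerCentralSeries (c-i)).relIndex ((⊤ : Subgroup G).lowerCentralSeries (c-(i+1))) ≠ 1 := by
      intro h1
      exact hstrict.ne (le_antisymm hstrict.le (Subgroup.relIndex_eq_one.mp h1))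
    have hple : p ≤ ((⊤ : Subgroup G).lowerCentralSeries (c-i)).relIndex ((⊤ : Subgroup G).lowerCentralSeries (c-(i+1))) :=
      p_le_of_dvd hp (lcs_relindex_dvd hcard hstrict.le) hne1
    calc p ^ (i+1) = p * p ^ i := by ring
      _ ≤ ((⊤ : Subgroup G).lowerCentralSeries (c-i)).relIndex ((⊤ : Subgroup G).lowerCentralSeries (c-(i+1))) *
            Nat.card ((⊤ : Subgroup G).lowerCentralSeries (c - i)) :=
        Nat.mul_le_mul hple (ih (by omega))
      _ = Nat.card ((⊤ : Subgroup G).lowerCentralSeries (c - (i+1))) := hcardrel.symm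

end Count

section Count2
variable {G : Type} [Group G] [Finite G]
set_option linter.unusedSectionVars false

lemma index_lcs1_ne_p {p : ℕ} (hp : p.Prime) [Group.IsNilpotent G]
    (hclass : 3 ≤ Group.nilpotencyClass G)
    (hidx : ((⊤ : Subgroup G).lowerCentralSeries 1).index = p) : False := by
  haveI : Fact p.Prime := ⟨hp⟩
  set N := (⊤ : Subgroup G).lowerCentralSeries 2 with hN
  haveI : N.Normal := Subgroup.lowerCentralSeries_normal ⊤ 2
  haveI : ((⊤ : Subgroup G).lowerCentralSeries 1).Normal := Subgroup.lowerCentralSeries_normal ⊤ 1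
  have hle12 : N ≤ (⊤ : Subgroup G).lowerCentralSeries 1 := lowerCentralSeries_antitone _ one_le_two
  let f : G ⧸ N →* G ⧸ (⊤ : Subgroup G).lowerCentralSeries 1 :=
    QuotientGroup.map N ((⊤ : Subgroup G).lowerCentralSeries 1) (MonoidHom.id G) hle12
  haveI : IsCyclic (G ⧸ (⊤ : Subgroup G).lowerCentralSeries 1) := by
    apply isCyclic_of_prime_card (p := p)
    rw [← hidx]; rfl
  have hker : f.ker ≤ Subgroup.center (G ⧸ N) := by
    intro x hx
    induction x using QuotientGroup.induction_on with
    | H g =>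
      have hg : (QuotientGroup.mk g : G ⧸ (⊤ : Subgroup G).lowerCentralSeries 1) = 1 := hx
      rw [QuotientGroup.eq_one_iff] at hg
      rw [Subgroup.mem_center_iff]
      intro y
      induction y using QuotientGroup.induction_on with
      | H h =>
        show QuotientGroup.mk (h * g) = QuotientGroup.mk (g * h)
        rw [QuotientGroup.eq]
        have : (h * g)⁻¹ * (g * h) = ⁅g⁻¹, h⁻¹⁆ := by
          simp [commutatorElement_def, mul_assoc]
        rw [this, hN]
        exact Subgroup.commutator_mem_commutator (Subgroup.inv_mem _ hg) (Subgroup.mem_top _)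
  have hcomm := commutative_of_cyclic_center_quotient f hker
  have h12 : (⊤ : Subgroup G).lowerCentralSeries 1 ≤ N := by
    rw [show (⊤ : Subgroup G).lowerCentralSeries 1 = ⁅(⊤ : Subgroup G), ⊤⁆ from rfl]
    rw [Subgroup.commutator_le]
    intro x _ y _
    have : (QuotientGroup.mk ⁅x, y⁆ : G ⧸ N) = ⁅(QuotientGroup.mk x : G ⧸ N), QuotientGroup.mk y⁆ :=
      map_commutatorElement (QuotientGroup.mk' N) x y
    have h1 : (QuotientGroup.mk ⁅x, y⁆ : G ⧸ N) = 1 := by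
      rw [this, commutatorElement_eq_one_iff_mul_comm]
      exact hcomm _ _
    rwa [QuotientGroup.eq_one_iff] at h1
  have heq : (⊤ : Subgroup G).lowerCentralSeries (1+1) = (⊤ : Subgroup G).lowerCentralSeries 1 :=
    le_antisymm (lowerCentralSeries_antitone _ one_le_two) h12
  have := lcs_eq_bot_of_succ_eq 1 heq
  rw [lowerCentralSeries_eq_bot_iff_nilpotencyClass_le] at this
  omega

lemma relindex_eq_p {p n : ℕ} (hp : p.Prime) (hcard : Nat.card G = p^n) (hn : 4 ≤ n)
    [Group.IsNilpotent G] (hclass : Group.nilpotencyClass G = n - 1) :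
    ((⊤ : Subgroup G).lowerCentralSeries 2).relIndex ((⊤ : Subgroup G).lowerCentralSeries 1) = p ∧
    ((⊤ : Subgroup G).lowerCentralSeries 3).relIndex ((⊤ : Subgroup G).lowerCentralSeries 2) = p := by
  set a := ((⊤ : Subgroup G).lowerCentralSeries 1).index with ha'
  set b := ((⊤ : Subgroup G).lowerCentralSeries 2).relIndex ((⊤ : Subgroup G).lowerCentralSeries 1) with hb'
  set c := ((⊤ : Subgroup G).lowerCentralSeries 3).relIndex ((⊤ : Subgroup G).lowerCentralSeries 2) with hc'
  set N4 := Nat.card ((⊤ : Subgroup G).lowerCentralSeries 3) with hN4'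
  have hle21 : (⊤ : Subgroup G).lowerCentralSeries 2 ≤ (⊤ : Subgroup G).lowerCentralSeries 1 :=
    lowerCentralSeries_antitone _ one_le_two
  have hle32 : (⊤ : Subgroup G).lowerCentralSeries 3 ≤ (⊤ : Subgroup G).lowerCentralSeries 2 :=
    lowerCentralSeries_antitone _ (by norm_num)
  have habc : a * (b * (c * N4)) = p ^ n := by
    rw [← card_eq_relindex_mul_card hle32, ← card_eq_relindex_mul_card hle21,
      Subgroup.index_mul_card, hcard]
  -- strictness facts
  have hstrict1 : (⊤ : Subgroup G).lowerCentralSeries 2 < (⊤ : Subgroup G).lowerCentralSeries 1 :=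
    lcs_strict (by omega)
  have hstrict2 : (⊤ : Subgroup G).lowerCentralSeries 3 < (⊤ : Subgroup G).lowerCentralSeries 2 :=
    lcs_strict (by omega)
  have hb_ne1 : b ≠ 1 := fun h1 =>
    hstrict1.ne (le_antisymm hstrict1.le (Subgroup.relIndex_eq_one.mp h1))
  have hc_ne1 : c ≠ 1 := fun h1 =>
    hstrict2.ne (le_antisymm hstrict2.le (Subgroup.relIndex_eq_one.mp h1))
  have hb_ge : p ≤ b := p_le_of_dvd hp (lcs_relindex_dvd hcard hle21) hb_ne1
  have hc_ge : p ≤ c := p_le_of_dvd hp (lcs_relindex_dvd hcard hle32) hc_ne1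
  -- a ≥ p^2
  have ha_dvd : a ∣ p ^ n := hcard ▸ Subgroup.index_dvd_card _
  have ha_ne1 : a ≠ 1 := by
    intro h1
    have : (⊤ : Subgroup G).lowerCentralSeries 1 = ⊤ := Subgroup.index_eq_one.mp h1
    have heq : (⊤ : Subgroup G).lowerCentralSeries (0+1) = (⊤ : Subgroup G).lowerCentralSeries 0 := this
    have := lcs_eq_bot_of_succ_eq 0 heq
    rw [lowerCentralSeries_eq_bot_iff_nilpotencyClass_le] at this
    omega
  have ha_nep : a ≠ p := fun h => index_lcs1_ne_p hp (by omega) h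
  have ha_ge : p ^ 2 ≤ a := by
    obtain ⟨m, _, hm⟩ := (Nat.dvd_prime_pow hp).mp ha_dvd
    rw [hm] at ha_ne1 ha_nep ⊢
    have hm0 : m ≠ 0 := by rintro rfl; simp at ha_ne1
    have hm1 : m ≠ 1 := by rintro rfl; simp at ha_nep
    exact Nat.pow_le_pow_right hp.pos (by omega)
  -- N4 ≥ p^(n-4)
  have hN4_ge : p ^ (n-4) ≤ N4 := by
    have := card_lcs_ge hp hcard (n-4) (by omega)
    have h3 : Group.nilpotencyClass G - (n-4) = 3 := by omega
    rwa [h3] at this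
  -- conclude
  have hple : 0 < p ^ (n-1) := Nat.pow_pos hp.pos
  have key : ∀ x y : ℕ, p ≤ x → x * y = p ^ n → p ^ (n-1) ≤ y → x = p := by
    intro x y hx hxy hy
    by_contra hne
    have hx' : p + 1 ≤ x := by omega
    have : (p+1) * p^(n-1) ≤ x * y := Nat.mul_le_mul hx' hy
    rw [hxy] at this
    have hpn : p ^ n = p * p ^ (n-1) := by
      rw [← pow_succ']
      congr 1
      omega
    nlinarith [hp.pos, Nat.pow_pos (n := n-1) hp.pos]
  constructor
  · apply key b (a * (c * N4)) hb_ge (by ring_nf; ring_nf at habc; linarith [habc])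
    · calc p ^ (n-1) = p^2 * (p * p^(n-4)) := by
            rw [← pow_succ', ← pow_add]
            congr 1
            omega
        _ ≤ a * (c * N4) := Nat.mul_le_mul ha_ge (Nat.mul_le_mul hc_ge hN4_ge)
  · apply key c (a * (b * N4)) hc_ge (by ring_nf; ring_nf at habc; linarith [habc])
    · calc p ^ (n-1) = p^2 * (p * p^(n-4)) := by
            rw [← pow_succ', ← pow_add]
            congr 1
            omega
        _ ≤ a * (b * N4) := Nat.mul_le_mul ha_ge (Nat.mul_le_mul hb_ge hN4_ge)

end Count2

section CLE
variable {G : Type} [Group G] [Finite G]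
set_option linter.unusedSectionVars false

def commSub (g : G) : Subgroup G where
  carrier := {x | ⁅g, x⁆ ∈ (⊤ : Subgroup G).lowerCentralSeries 3}
  one_mem' := by
    simp only [Set.mem_setOf_eq, commutatorElement_one_right]
    exact Subgroup.one_mem _
  mul_mem' := by
    intro x y hx hy
    simp only [Set.mem_setOf_eq] at *
    have hid : ⁅g, x*y⁆ = ⁅g,x⁆ * (x * ⁅g,y⁆ * x⁻¹) := by group
    rw [hid]
    exact Subgroup.mul_mem _ hx ((Subgroup.lowerCentralSeries_normal ⊤ 3).conj_mem _ hy x)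
  inv_mem' := by
    intro x hx
    simp only [Set.mem_setOf_eq] at *
    have hid : ⁅g, x⁻¹⁆ = x⁻¹ * ⁅g,x⁆⁻¹ * (x⁻¹)⁻¹ := by group
    rw [hid]
    exact (Subgroup.lowerCentralSeries_normal ⊤ 3).conj_mem _ (Subgroup.inv_mem _ hx) x⁻¹

lemma conj_mem_iff (N : Subgroup G) (hN : N.Normal) (c v : G) :
    c * v * c⁻¹ ∈ N ↔ v ∈ N := by
  constructor
  · intro h
    have := hN.conj_mem _ h c⁻¹
    simpa [mul_assoc] using this
  · intro h
    exact hN.conj_mem _ h c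

lemma mul_mem_comm_iff (N : Subgroup G) (hN : N.Normal) (a b : G) :
    a * b ∈ N ↔ b * a ∈ N := by
  constructor <;> intro h
  · have := hN.conj_mem _ h b
    have hid : b * (a * b) * b⁻¹ = b * a := by group
    rwa [hid] at this
  · have := hN.conj_mem _ h a
    have hid : a * (b * a) * a⁻¹ = a * b := by group
    rwa [hid] at this

lemma index_C_le {p n : ℕ} (hp : p.Prime) (hcard : Nat.card G = p ^ n) (hn : 4 ≤ n)
    [Group.IsNilpotent G] (hclass : Group.nilpotencyClass G = n - 1)
    (C : Subgroup G)
    (hC : ∀ g : G, g ∈ C ↔ ∀ x ∈ commutator G, ⁅g, x⁆ ∈ (⊤ : Subgroup G).lowerCentralSeries 3) :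
    C.index ≤ p := by
  obtain ⟨hb, hc⟩ := relindex_eq_p hp hcard hn hclass
  have hle21 : (⊤ : Subgroup G).lowerCentralSeries 2 ≤ (⊤ : Subgroup G).lowerCentralSeries 1 :=
    lowerCentralSeries_antitone _ one_le_two
  have hstrict1 : (⊤ : Subgroup G).lowerCentralSeries 2 < (⊤ : Subgroup G).lowerCentralSeries 1 :=
    lcs_strict (by omega)
  obtain ⟨s, hs1, hs2⟩ := SetLike.exists_of_lt hstrict1
  -- generation of lcs 1
  have hgen : Subgroup.closure {s} ⊔ (⊤ : Subgroup G).lowerCentralSeries 2 = (⊤ : Subgroup G).lowerCentralSeries 1 := by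
    set K := Subgroup.closure {s} ⊔ (⊤ : Subgroup G).lowerCentralSeries 2 with hK
    have hsK : s ∈ K := Subgroup.mem_sup_left (Subgroup.subset_closure rfl)
    have hKle : K ≤ (⊤ : Subgroup G).lowerCentralSeries 1 :=
      sup_le (Subgroup.closure_le _ |>.mpr (by simpa using hs1)) hle21
    have h2K : (⊤ : Subgroup G).lowerCentralSeries 2 ≤ K := le_sup_right
    have hrel : ((⊤ : Subgroup G).lowerCentralSeries 2).relIndex K * K.relIndex ((⊤ : Subgroup G).lowerCentralSeries 1) = p := by
      rw [Subgroup.relIndex_mul_relIndex _ _ _ h2K hKle]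
      exact hb
    have hne1 : ((⊤ : Subgroup G).lowerCentralSeries 2).relIndex K ≠ 1 := by
      intro h1
      exact hs2 (Subgroup.relIndex_eq_one.mp h1 hsK)
    have hdvd : ((⊤ : Subgroup G).lowerCentralSeries 2).relIndex K ∣ p := ⟨_, hrel.symm⟩
    have heq : ((⊤ : Subgroup G).lowerCentralSeries 2).relIndex K = p :=
      ((Nat.Prime.eq_one_or_self_of_dvd hp _ hdvd).resolve_left hne1)
    have hone : K.relIndex ((⊤ : Subgroup G).lowerCentralSeries 1) = 1 := by
      rw [heq] at hrel
      have h' : p * K.relIndex ((⊤ : Subgroup G).lowerCentralSeries 1) = p * 1 := by simpa using hrel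
      exact Nat.eq_of_mul_eq_mul_left hp.pos h'
    exact le_antisymm hKle (Subgroup.relIndex_eq_one.mp hone)
  -- membership criterion
  have hmem : ∀ g : G, g ∈ C ↔ ⁅g, s⁆ ∈ (⊤ : Subgroup G).lowerCentralSeries 3 := by
    intro g
    constructor
    · intro hg
      exact (hC g).mp hg s hs1
    · intro hgs
      rw [hC]
      intro x hx
      have hxle : x ∈ commSub g := by
        have hle : (⊤ : Subgroup G).lowerCentralSeries 1 ≤ commSub g := by
          rw [← hgen]
          apply sup_le
          · rw [Subgroup.closure_le]
            intro y hy
            rw [Set.mem_singleton_iff] at hy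
            subst hy
            exact hgs
          · intro y hy
            show ⁅g, y⁆ ∈ (⊤ : Subgroup G).lowerCentralSeries 3
            have h1 : ⁅g, y⁆ ∈ ⁅(⊤ : Subgroup G), (⊤ : Subgroup G).lowerCentralSeries 2⁆ :=
              Subgroup.commutator_mem_commutator (Subgroup.mem_top g) hy
            rwa [Subgroup.commutator_comm] at h1
        exact hle hx
      exact hxle
  -- commutators land in lcs 2
  have hmem2 : ∀ g : G, ⁅g, s⁆ ∈ (⊤ : Subgroup G).lowerCentralSeries 2 := by
    intro g
    have h1 : ⁅g, s⁆ ∈ ⁅(⊤ : Subgroup G), (⊤ : Subgroup G).lowerCentralSeries 1⁆ :=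
      Subgroup.commutator_mem_commutator (Subgroup.mem_top g) hs1
    rwa [Subgroup.commutator_comm] at h1
  -- the quotient
  haveI hN3 : ((⊤ : Subgroup G).lowerCentralSeries 3).Normal := Subgroup.lowerCentralSeries_normal ⊤ 3
  let Q := ((⊤ : Subgroup G).lowerCentralSeries 2) ⧸
    (((⊤ : Subgroup G).lowerCentralSeries 3).subgroupOf ((⊤ : Subgroup G).lowerCentralSeries 2))
  let q : G → Q := fun g => QuotientGroup.mk ⟨⁅g, s⁆, hmem2 g⟩
  have hq_iff : ∀ g h : G, q g = q h ↔ g⁻¹ * h ∈ C := by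
    intro g h
    have e1 : q g = q h ↔
        (⟨⁅g,s⁆, hmem2 g⟩ : (⊤ : Subgroup G).lowerCentralSeries 2)⁻¹ * ⟨⁅h,s⁆, hmem2 h⟩ ∈
          ((⊤ : Subgroup G).lowerCentralSeries 3).subgroupOf ((⊤ : Subgroup G).lowerCentralSeries 2) := by
      constructor
      · intro hqe; exact (QuotientGroup.eq ).mp hqe
      · intro hm; exact (QuotientGroup.eq).mpr hm
    rw [e1, Subgroup.mem_subgroupOf]
    have e2 : ((⟨⁅g,s⁆, hmem2 g⟩ : (⊤ : Subgroup G).lowerCentralSeries 2)⁻¹ *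
        ⟨⁅h,s⁆, hmem2 h⟩ : (⊤ : Subgroup G).lowerCentralSeries 2) = (⁅g,s⁆⁻¹ * ⁅h,s⁆ : G) := rfl
    rw [e2]
    rw [hmem (g⁻¹ * h)]
    -- identity: ⁅g⁻¹*h, s⁆ = g⁻¹ * (⁅h,s⁆ * ⁅g,s⁆⁻¹) * (g⁻¹)⁻¹
    have hid : ⁅g⁻¹*h, s⁆ = g⁻¹ * (⁅h,s⁆ * ⁅g,s⁆⁻¹) * (g⁻¹)⁻¹ := by group
    rw [hid, conj_mem_iff _ hN3]
    exact (mul_mem_comm_iff _ hN3 _ _).symm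
  -- injection from G ⧸ C
  let ψ : G ⧸ C → Q := fun x =>
    Quotient.liftOn' x q (by
      intro a b hab
      rw [QuotientGroup.leftRel_apply] at hab
      exact (hq_iff a b).mpr hab)
  have hinj : Function.Injective ψ := by
    intro x y
    induction x using Quotient.inductionOn' with
    | h a =>
      induction y using Quotient.inductionOn' with
      | h b =>
        intro hxy
        have : q a = q b := hxy
        exact Quotient.sound' (QuotientGroup.leftRel_apply.mpr ((hq_iff a b).mp this))
  have hcardle : Nat.card (G ⧸ C) ≤ Nat.card Q := Nat.card_le_card_of_injective ψ hinj
  have hQcard : Nat.card Q = p := hc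
  calc C.index = Nat.card (G ⧸ C) := rfl
    _ ≤ Nat.card Q := hcardle
    _ = p := hQcard
end CLE


/-- Let `G` be a finite `p`-group of maximal class with `|G| = p^n ≥ p^4`, having an
irreducible complex character of degree greater than `p`. Then the major centralizer
`G₁ = C_G(γ₂(G)/γ₄(G))` is nonabelian. -/
theorem stmt19 (p n : ℕ) [Fact p.Prime] (G : Type) [Group G] [Finite G]
    (hG : IsPGroup p G) (hcard : Nat.card G = p ^ n) (hn : 4 ≤ n)
    (hmax : Group.nilpotencyClass G = n - 1)
    (hchar : ∃ (V : FDRep ℂ G), CategoryTheory.Simple V ∧ p < Module.finrank ℂ V)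
    (C : Subgroup G)
    (hC : ∀ g : G, g ∈ C ↔ ∀ x ∈ commutator G, ⁅g, x⁆ ∈ (⊤ : Subgroup G).lowerCentralSeries 3) :
    ¬ IsMulCommutative C := by
  intro hcomm
  haveI hnil : Group.IsNilpotent G := hG.isNilpotent
  have hp : p.Prime := Fact.out
  have hclass : Group.nilpotencyClass G = n - 1 := hmax
  have hidx : C.index ≤ p := index_C_le hp hcard hn hclass C hC
  obtain ⟨V, hsimp, hdim⟩ := hchar
  haveI := hsimp
  have hnt : Nontrivial V := Module.nontrivial_of_finrank_pos (R := ℂ) (by omega)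
  let ρ' : Representation ℂ C V := V.ρ.comp C.subtype
  have hcommρ : ∀ a b : C, (ρ' a).comp (ρ' b) = (ρ' b).comp (ρ' a) := by
    intro a b
    have hab : a * b = b * a := hcomm.is_comm.comm a b
    rw [← Module.End.mul_eq_comp, ← Module.End.mul_eq_comp, ← map_mul, ← map_mul, hab]
  obtain ⟨W, hWinv, hW1⟩ := exists_invariant_line C (Module.finrank ℂ V) V
    inferInstance inferInstance inferInstance hnt le_rfl ρ' hcommρ
  have hWinv' : ∀ a : C, ∀ w ∈ W, V.ρ (a : G) w ∈ W := hWinv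
  have hfin := finrank_le_index V C W hWinv' hW1
  omega
end
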